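/- arXiv:2410.23574 — 5 statements merged into one kernel-verified Lean document; each statement's English description precedes it below -/
import Mathlib

section
/- Suppose each of the functions f₁, …, f_T : (ℝ^d)^h → ℝ is β-smooth. Then C_T : (ℝ^d)^T → ℝ, C_T(x) = Σ_{t=1}^T f_t(x_{t−h+1:t}), is differentiable and its gradient is (βh)-Lipschitz, i.e. C_T is (βh)-smooth with respect to the Euclidean norm on (ℝ^d)^T. (This is Lemma 1(b), smoothness part, of the paper.) -/
/-- The sequence `x₁, …, x_T` padded with `x̄₀` for indices `t ≤ 0` (indices are `1`-based,
given as integers). -/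
noncomputable def pad {d : ℕ} (T : ℕ) (xbar : EuclideanSpace ℝ (Fin d))
    (x : Fin T → EuclideanSpace ℝ (Fin d)) (t : ℤ) : EuclideanSpace ℝ (Fin d) :=
  if ht : 1 ≤ t ∧ t ≤ T then x ⟨(t - 1).toNat, by omega⟩ else xbar

/-- The `t`-th window `x_{t-h+1:t} = (x_{t-h+1}, …, x_t) ∈ (ℝ^d)^h`, where the product
space carries the Euclidean (`L²`) norm. -/
noncomputable def window {d : ℕ} (h T : ℕ) (xbar : EuclideanSpace ℝ (Fin d))
    (x : Fin T → EuclideanSpace ℝ (Fin d)) (t : ℤ) :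
    PiLp 2 (fun _ : Fin h => EuclideanSpace ℝ (Fin d)) :=
  WithLp.toLp 2 (fun i : Fin h => pad T xbar x (t - h + 1 + i))

open Finset
open scoped RealInnerProductSpace

/-- collapse a sum of `ite`s over a unique index -/
lemma sum_ite_int {n : ℕ} {M : Type*} [AddCommMonoid M] (K : ℤ) (g : Fin n → M) :
    (∑ j : Fin n, if ((j : ℕ) : ℤ) = K then g j else 0) =
      if hK : 0 ≤ K ∧ K < n then g ⟨K.toNat, by omega⟩ else 0 := by
  split
  · rename_i hK
    rw [Finset.sum_eq_single (⟨K.toNat, by omega⟩ : Fin n)]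
    · rw [if_pos (by simp; omega)]
    · intro b _ hb
      rw [if_neg]
      intro hc
      apply hb
      apply Fin.ext
      have := b.isLt
      simp only [Fin.val_mk]
      omega
    · simp
  · rename_i hK
    apply Finset.sum_eq_zero
    intro j _
    rw [if_neg]
    intro hc
    have := j.isLt
    omega

lemma count_ite_le {n : ℕ} (K : ℤ) :
    (∑ j : Fin n, if ((j : ℕ) : ℤ) = K then (1:ℝ) else 0) ≤ 1 := by
  rw [sum_ite_int]
  split <;> norm_num

noncomputable def Alin (d h T : ℕ) (t : Fin T) :
    (PiLp 2 fun _ : Fin T => EuclideanSpace ℝ (Fin d)) →L[ℝ]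
      (PiLp 2 fun _ : Fin h => EuclideanSpace ℝ (Fin d)) :=
  ContinuousLinearMap.mk
    { toFun := fun x => WithLp.toLp 2 (fun i : Fin h => ∑ s : Fin T,
        if ((s : ℕ) : ℤ) = (t : ℕ) + 1 - (h : ℕ) + (i : ℕ) then x s else 0)
      map_add' := by
        intro x y
        refine PiLp.ext fun i => ?_
        simp only [PiLp.toLp_apply, PiLp.add_apply, ← Finset.sum_add_distrib]
        exact Finset.sum_congr rfl fun s _ => by split <;> simp
      map_smul' := by
        intro r x
        refine PiLp.ext fun i => ?_
        simp only [PiLp.toLp_apply, PiLp.smul_apply, RingHom.id_apply, Finset.smul_sum]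
        exact Finset.sum_congr rfl fun s _ => by split <;> simp }
    ((PiLp.continuous_toLp 2 _).comp (continuous_pi fun i => continuous_finset_sum _ fun s _ => by
      split
      · exact PiLp.continuous_apply _ _ s
      · exact continuous_const))

noncomputable def Blin (d h T : ℕ) (t : Fin T) :
    (PiLp 2 fun _ : Fin h => EuclideanSpace ℝ (Fin d)) →L[ℝ]
      (PiLp 2 fun _ : Fin T => EuclideanSpace ℝ (Fin d)) :=
  ContinuousLinearMap.mk
    { toFun := fun u => WithLp.toLp 2 (fun s : Fin T => ∑ i : Fin h,
        if ((i : ℕ) : ℤ) = (s : ℕ) + (h : ℕ) - 1 - (t : ℕ) then u i else 0)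
      map_add' := by
        intro x y
        refine PiLp.ext fun s => ?_
        simp only [PiLp.toLp_apply, PiLp.add_apply, ← Finset.sum_add_distrib]
        exact Finset.sum_congr rfl fun i _ => by split <;> simp
      map_smul' := by
        intro r x
        refine PiLp.ext fun s => ?_
        simp only [PiLp.toLp_apply, PiLp.smul_apply, RingHom.id_apply, Finset.smul_sum]
        exact Finset.sum_congr rfl fun i _ => by split <;> simp }
    ((PiLp.continuous_toLp 2 _).comp (continuous_pi fun s => continuous_finset_sum _ fun i _ => by
      split
      · exact PiLp.continuous_apply _ _ i
      · exact continuous_const))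

lemma Alin_apply (d h T : ℕ) (t : Fin T) (x) (i : Fin h) :
    Alin d h T t x i = ∑ s : Fin T,
      if ((s : ℕ) : ℤ) = (t : ℕ) + 1 - (h : ℕ) + (i : ℕ) then x s else 0 := rfl

lemma Blin_apply (d h T : ℕ) (t : Fin T) (u) (s : Fin T) :
    Blin d h T t u s = ∑ i : Fin h,
      if ((i : ℕ) : ℤ) = (s : ℕ) + (h : ℕ) - 1 - (t : ℕ) then u i else 0 := rfl

lemma window_eq (d h T : ℕ) (xbar : EuclideanSpace ℝ (Fin d))
    (x : PiLp 2 fun _ : Fin T => EuclideanSpace ℝ (Fin d)) (t : Fin T) :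
    window h T xbar x ((t : ℤ) + 1) = Alin d h T t x + window h T xbar 0 ((t : ℤ) + 1) := by
  refine PiLp.ext fun i => ?_
  simp only [window, pad, PiLp.toLp_apply, PiLp.add_apply, Alin_apply, sum_ite_int]
  by_cases hc : (1:ℤ) ≤ (t : ℤ) + 1 - h + 1 + i ∧ ((t : ℤ) + 1 - h + 1 + i : ℤ) ≤ T
  · rw [dif_pos hc, dif_pos hc, dif_pos (by omega)]
    have : (0 : EuclideanSpace ℝ (Fin d)) = (0 : Fin T → EuclideanSpace ℝ (Fin d)) ⟨((t : ℤ) + 1 - h + 1 + i - 1).toNat, by omega⟩ := rfl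
    rw [Pi.zero_apply, add_zero]
    have hE : ((↑↑t + 1 - ↑h + 1 + ↑↑i - 1 : ℤ)).toNat = ((↑↑t + 1 - ↑h + ↑↑i : ℤ)).toNat := by omega
    exact congrArg x (Fin.ext (by simp only [Fin.val_mk]; omega))
  · rw [dif_neg hc, dif_neg hc, dif_neg (by omega), zero_add]

lemma adj (d h T : ℕ) (t : Fin T) (x : PiLp 2 fun _ : Fin T => EuclideanSpace ℝ (Fin d))
    (u : PiLp 2 fun _ : Fin h => EuclideanSpace ℝ (Fin d)) :
    ⟪Alin d h T t x, u⟫ = ⟪x, Blin d h T t u⟫ := by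
  simp only [PiLp.inner_apply, Alin_apply, Blin_apply, sum_inner, inner_sum]
  rw [Finset.sum_comm]
  refine Finset.sum_congr rfl fun s _ => Finset.sum_congr rfl fun i _ => ?_
  by_cases hc : ((i : ℕ) : ℤ) = (s : ℕ) + (h : ℕ) - 1 - (t : ℕ)
  · rw [if_pos hc, if_pos (by omega)]
  · rw [if_neg hc, if_neg (by omega)]
    simp

lemma hasGradientAt_comp (d h T : ℕ) (t : Fin T)
    (g : (PiLp 2 fun _ : Fin h => EuclideanSpace ℝ (Fin d)) → ℝ)
    (hg : Differentiable ℝ g) (c : PiLp 2 fun _ : Fin h => EuclideanSpace ℝ (Fin d))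
    (x : PiLp 2 fun _ : Fin T => EuclideanSpace ℝ (Fin d)) :
    HasGradientAt (fun z => g (Alin d h T t z + c))
      (Blin d h T t (gradient g (Alin d h T t x + c))) x := by
  have h1 : HasFDerivAt (fun z => Alin d h T t z + c) (Alin d h T t : _ →L[ℝ] _) x :=
    (Alin d h T t).hasFDerivAt.add_const c
  have h2 := (hg (Alin d h T t x + c)).hasGradientAt.hasFDerivAt
  have h3 := h2.comp x h1
  rw [hasGradientAt_iff_hasFDerivAt]
  refine h3.congr_fderiv ?_
  ext v
  simp only [ContinuousLinearMap.comp_apply, InnerProductSpace.toDual_apply_apply]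
  rw [← real_inner_comm _ v, ← adj, real_inner_comm]

lemma hasGradientAt_CT (d h T : ℕ)
    (f : Fin T → (PiLp 2 fun _ : Fin h => EuclideanSpace ℝ (Fin d)) → ℝ)
    (hdiff : ∀ t, Differentiable ℝ (f t))
    (c : Fin T → PiLp 2 fun _ : Fin h => EuclideanSpace ℝ (Fin d))
    (x : PiLp 2 fun _ : Fin T => EuclideanSpace ℝ (Fin d)) :
    HasGradientAt (fun z => ∑ t : Fin T, f t (Alin d h T t z + c t))
      (∑ t : Fin T, Blin d h T t (gradient (f t) (Alin d h T t x + c t))) x := by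
  rw [hasGradientAt_iff_hasFDerivAt, map_sum]
  exact HasFDerivAt.fun_sum fun t _ =>
    (hasGradientAt_comp d h T t (f t) (hdiff t) (c t) x).hasFDerivAt

lemma Blin_coord_sq (d h T : ℕ) (t : Fin T) (u) (s : Fin T) :
    ‖Blin d h T t u s‖^2 =
      ∑ i : Fin h, if ((i:ℕ):ℤ) = (s:ℕ) + (h:ℕ) - 1 - (t:ℕ) then ‖u i‖^2 else 0 := by
  rw [Blin_apply, sum_ite_int, sum_ite_int,
    apply_dite (fun z : EuclideanSpace ℝ (Fin d) => ‖z‖^2)]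
  simp

lemma L2 (d h T : ℕ) (t : Fin T) (u : PiLp 2 fun _ : Fin h => EuclideanSpace ℝ (Fin d)) :
    ∑ s : Fin T, ‖Blin d h T t u s‖^2 ≤ ∑ i : Fin h, ‖u i‖^2 := by
  simp only [Blin_coord_sq]
  rw [Finset.sum_comm]
  apply Finset.sum_le_sum
  intro i _
  have hcong : ∀ s : Fin T, (if ((i:ℕ):ℤ) = (s:ℕ) + (h:ℕ) - 1 - (t:ℕ) then ‖u i‖^2 else 0)
      = (if ((s:ℕ):ℤ) = (t:ℕ) + 1 - (h:ℕ) + (i:ℕ) then ‖u i‖^2 else 0) := fun s =>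
    if_congr (by omega) rfl rfl
  simp only [hcong, sum_ite_int]
  split
  · exact le_rfl
  · positivity

lemma L1 (d h T : ℕ) (w : Fin T → PiLp 2 fun _ : Fin h => EuclideanSpace ℝ (Fin d))
    (s : Fin T) :
    ‖∑ t : Fin T, Blin d h T t (w t) s‖^2 ≤ (h:ℝ) * ∑ t : Fin T, ‖Blin d h T t (w t) s‖^2 := by
  set χ : Fin T → ℝ := fun t =>
    if 0 ≤ ((s:ℕ):ℤ) + (h:ℕ) - 1 - (t:ℕ) ∧ ((s:ℕ):ℤ) + (h:ℕ) - 1 - (t:ℕ) < (h:ℕ) then 1 else 0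
    with hχ
  have hzero : ∀ t : Fin T, ‖Blin d h T t (w t) s‖ = χ t * ‖Blin d h T t (w t) s‖ := by
    intro t
    by_cases hcond : 0 ≤ ((s:ℕ):ℤ) + (h:ℕ) - 1 - (t:ℕ) ∧ ((s:ℕ):ℤ) + (h:ℕ) - 1 - (t:ℕ) < (h:ℕ)
    · simp only [hχ]
      rw [if_pos hcond, one_mul]
    · have hB : Blin d h T t (w t) s = 0 := by
        rw [Blin_apply, sum_ite_int, dif_neg hcond]
      simp [hB]
  have hχsq : ∀ t : Fin T, χ t ^ 2 = χ t := by
    intro t; simp only [hχ]; split <;> norm_num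
  have hcount : ∑ t : Fin T, χ t ≤ (h:ℝ) := by
    have hb : ∀ t : Fin T, χ t ≤ ∑ j : Fin h, if ((t:ℕ):ℤ) = (s:ℕ) + (j:ℕ) then (1:ℝ) else 0 := by
      intro t
      simp only [hχ]
      split
      · rename_i hcond
        refine le_trans (le_of_eq ?_)
          (Finset.single_le_sum (f := fun j : Fin h => if ((t:ℕ):ℤ) = (s:ℕ) + (j:ℕ) then (1:ℝ) else 0)
            (fun j _ => by positivity) (Finset.mem_univ (⟨(t:ℕ) - (s:ℕ), by omega⟩ : Fin h)))
        exact (if_pos (by simp only [Fin.val_mk]; omega)).symm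
      · positivity
    calc ∑ t : Fin T, χ t
        ≤ ∑ t : Fin T, ∑ j : Fin h, (if ((t:ℕ):ℤ) = (s:ℕ) + (j:ℕ) then (1:ℝ) else 0) :=
          Finset.sum_le_sum fun t _ => hb t
      _ = ∑ j : Fin h, ∑ t : Fin T, (if ((t:ℕ):ℤ) = (s:ℕ) + (j:ℕ) then (1:ℝ) else 0) :=
          Finset.sum_comm
      _ ≤ ∑ _j : Fin h, (1:ℝ) := Finset.sum_le_sum fun j _ => count_ite_le _
      _ = (h:ℝ) := by simp
  have h1 : ‖∑ t : Fin T, Blin d h T t (w t) s‖ ≤ ∑ t : Fin T, ‖Blin d h T t (w t) s‖ :=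
    norm_sum_le _ _
  have h2 : (∑ t : Fin T, ‖Blin d h T t (w t) s‖)^2
      ≤ (∑ t : Fin T, χ t) * ∑ t : Fin T, ‖Blin d h T t (w t) s‖^2 := by
    have := Finset.sum_mul_sq_le_sq_mul_sq Finset.univ χ (fun t => ‖Blin d h T t (w t) s‖)
    simp only [hχsq] at this
    calc (∑ t : Fin T, ‖Blin d h T t (w t) s‖)^2
        = (∑ t : Fin T, χ t * ‖Blin d h T t (w t) s‖)^2 := by
          congr 1; exact Finset.sum_congr rfl fun t _ => hzero t
      _ ≤ _ := this
  calc ‖∑ t : Fin T, Blin d h T t (w t) s‖^2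
      ≤ (∑ t : Fin T, ‖Blin d h T t (w t) s‖)^2 := by
        apply pow_le_pow_left₀ (norm_nonneg _) h1
    _ ≤ (∑ t : Fin T, χ t) * ∑ t : Fin T, ‖Blin d h T t (w t) s‖^2 := h2
    _ ≤ (h:ℝ) * ∑ t : Fin T, ‖Blin d h T t (w t) s‖^2 := by
        apply mul_le_mul_of_nonneg_right hcount
        positivity

lemma lemD (d h T : ℕ) (v : PiLp 2 fun _ : Fin T => EuclideanSpace ℝ (Fin d)) :
    ∑ t : Fin T, ‖Alin d h T t v‖^2 ≤ (h:ℝ) * ∑ s : Fin T, ‖v s‖^2 := by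
  have e1 : ∀ (t : Fin T) (i : Fin h), ‖Alin d h T t v i‖^2
      = ∑ s : Fin T, (if ((s:ℕ):ℤ) = (t:ℕ) + 1 - (h:ℕ) + (i:ℕ) then (1:ℝ) else 0) * ‖v s‖^2 := by
    intro t i
    rw [Alin_apply, sum_ite_int]
    have : ∀ s : Fin T, (if ((s:ℕ):ℤ) = (t:ℕ) + 1 - (h:ℕ) + (i:ℕ) then (1:ℝ) else 0) * ‖v s‖^2
        = (if ((s:ℕ):ℤ) = (t:ℕ) + 1 - (h:ℕ) + (i:ℕ) then ‖v s‖^2 else 0) := by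
      intro s; split <;> simp
    simp only [this, sum_ite_int, apply_dite (fun z : EuclideanSpace ℝ (Fin d) => ‖z‖^2)]
    simp
  have e2 : ∀ t : Fin T, ‖Alin d h T t v‖^2 = ∑ i : Fin h, ‖Alin d h T t v i‖^2 :=
    fun t => PiLp.norm_sq_eq_of_L2 _ _
  have count : ∀ s : Fin T,
      (∑ t : Fin T, ∑ i : Fin h, if ((s:ℕ):ℤ) = (t:ℕ) + 1 - (h:ℕ) + (i:ℕ) then (1:ℝ) else 0)
        ≤ (h:ℝ) := by
    intro s
    have hcong : ∀ (t : Fin T) (i : Fin h),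
        (if ((s:ℕ):ℤ) = (t:ℕ) + 1 - (h:ℕ) + (i:ℕ) then (1:ℝ) else 0)
          = (if ((t:ℕ):ℤ) = (s:ℕ) + (h:ℕ) - 1 - (i:ℕ) then (1:ℝ) else 0) := fun t i =>
      if_congr (by omega) rfl rfl
    simp only [hcong]
    rw [Finset.sum_comm]
    calc ∑ i : Fin h, ∑ t : Fin T, (if ((t:ℕ):ℤ) = (s:ℕ) + (h:ℕ) - 1 - (i:ℕ) then (1:ℝ) else 0)
        ≤ ∑ _i : Fin h, (1:ℝ) := Finset.sum_le_sum fun i _ => count_ite_le _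
      _ = (h:ℝ) := by simp
  calc ∑ t : Fin T, ‖Alin d h T t v‖^2
      = ∑ t : Fin T, ∑ i : Fin h, ∑ s : Fin T,
          (if ((s:ℕ):ℤ) = (t:ℕ) + 1 - (h:ℕ) + (i:ℕ) then (1:ℝ) else 0) * ‖v s‖^2 := by
        simp only [e2, e1]
    _ = ∑ t : Fin T, ∑ s : Fin T, ∑ i : Fin h,
          (if ((s:ℕ):ℤ) = (t:ℕ) + 1 - (h:ℕ) + (i:ℕ) then (1:ℝ) else 0) * ‖v s‖^2 :=
        Finset.sum_congr rfl fun t _ => Finset.sum_comm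
    _ = ∑ s : Fin T, ∑ t : Fin T, ∑ i : Fin h,
          (if ((s:ℕ):ℤ) = (t:ℕ) + 1 - (h:ℕ) + (i:ℕ) then (1:ℝ) else 0) * ‖v s‖^2 :=
        Finset.sum_comm
    _ = ∑ s : Fin T, (∑ t : Fin T, ∑ i : Fin h,
          (if ((s:ℕ):ℤ) = (t:ℕ) + 1 - (h:ℕ) + (i:ℕ) then (1:ℝ) else 0)) * ‖v s‖^2 := by
        exact Finset.sum_congr rfl fun s _ => by rw [Finset.sum_mul]; exact Finset.sum_congr rfl fun t _ => by rw [Finset.sum_mul]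
    _ ≤ ∑ s : Fin T, (h:ℝ) * ‖v s‖^2 := Finset.sum_le_sum fun s _ =>
        mul_le_mul_of_nonneg_right (count s) (by positivity)
    _ = (h:ℝ) * ∑ s : Fin T, ‖v s‖^2 := by rw [Finset.mul_sum]

/-- If each `f_t : (ℝ^d)^h → ℝ` is `β`-smooth (differentiable with
`β`-Lipschitz gradient), then `C_T x = ∑_{t=1}^T f_t (x_{t-h+1:t})` is differentiable and
its gradient is `(βh)`-Lipschitz on `(ℝ^d)^T` with the Euclidean norm. -/
theorem CT_smooth {d h T : ℕ} (hd : 1 ≤ d) (hh : 1 ≤ h) (hT : 1 ≤ T)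
    (xbar : EuclideanSpace ℝ (Fin d)) (β : ℝ)
    (f : Fin T → (PiLp 2 fun _ : Fin h => EuclideanSpace ℝ (Fin d)) → ℝ)
    (hdiff : ∀ t, Differentiable ℝ (f t))
    (hlip : ∀ t, ∀ z w, ‖gradient (f t) z - gradient (f t) w‖ ≤ β * ‖z - w‖) :
    Differentiable ℝ
        (fun x : PiLp 2 fun _ : Fin T => EuclideanSpace ℝ (Fin d) =>
          ∑ t : Fin T, f t (window h T xbar x ((t : ℤ) + 1))) ∧
      ∀ x y : PiLp 2 fun _ : Fin T => EuclideanSpace ℝ (Fin d),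
        ‖gradient (fun z : PiLp 2 fun _ : Fin T => EuclideanSpace ℝ (Fin d) =>
              ∑ t : Fin T, f t (window h T xbar z ((t : ℤ) + 1))) x -
            gradient (fun z : PiLp 2 fun _ : Fin T => EuclideanSpace ℝ (Fin d) =>
              ∑ t : Fin T, f t (window h T xbar z ((t : ℤ) + 1))) y‖ ≤
          β * h * ‖x - y‖ := by
  classical
  have hβ : 0 ≤ β := by
    set e : PiLp 2 fun _ : Fin h => EuclideanSpace ℝ (Fin d) :=
      WithLp.toLp 2 fun _ => WithLp.toLp 2 fun _ => (1:ℝ) with he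
    have hne : e ≠ 0 := by
      intro hcontra
      have h1 : e ⟨0, hh⟩ ⟨0, hd⟩ =
          (0 : PiLp 2 fun _ : Fin h => EuclideanSpace ℝ (Fin d)) ⟨0, hh⟩ ⟨0, hd⟩ := by
        rw [hcontra]
      have h2 : e ⟨0, hh⟩ ⟨0, hd⟩ = (1:ℝ) := rfl
      rw [h2] at h1
      simp at h1
    have hpos : 0 < ‖e - 0‖ := by
      rw [sub_zero]; exact norm_pos_iff.mpr hne
    have := le_trans (norm_nonneg _) (hlip ⟨0, hT⟩ e 0)
    nlinarith
  have hfun : (fun x : PiLp 2 fun _ : Fin T => EuclideanSpace ℝ (Fin d) =>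
        ∑ t : Fin T, f t (window h T xbar x ((t : ℤ) + 1)))
      = fun x : PiLp 2 fun _ : Fin T => EuclideanSpace ℝ (Fin d) =>
        ∑ t : Fin T, f t (Alin d h T t x + window h T xbar 0 ((t : ℤ) + 1)) := by
    funext z
    exact Finset.sum_congr rfl fun t _ => by rw [window_eq]
  constructor
  · rw [hfun]
    exact Differentiable.fun_sum fun t _ =>
      (hdiff t).comp ((Alin d h T t).differentiable.add_const _)
  · intro x y
    rw [hfun]
    have hgrad : ∀ z : PiLp 2 fun _ : Fin T => EuclideanSpace ℝ (Fin d),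
        gradient (fun x : PiLp 2 fun _ : Fin T => EuclideanSpace ℝ (Fin d) =>
            ∑ t : Fin T, f t (Alin d h T t x + window h T xbar 0 ((t : ℤ) + 1))) z
          = ∑ t : Fin T, Blin d h T t
              (gradient (f t) (Alin d h T t z + window h T xbar 0 ((t : ℤ) + 1))) :=
      fun z => (hasGradientAt_CT d h T f hdiff
        (fun t => window h T xbar 0 ((t : ℤ) + 1)) z).gradient
    rw [hgrad x, hgrad y, ← Finset.sum_sub_distrib]
    set w : Fin T → PiLp 2 fun _ : Fin h => EuclideanSpace ℝ (Fin d) := fun t =>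
      gradient (f t) (Alin d h T t x + window h T xbar 0 ((t : ℤ) + 1)) -
        gradient (f t) (Alin d h T t y + window h T xbar 0 ((t : ℤ) + 1)) with hw
    have hsum : (∑ t : Fin T,
        (Blin d h T t (gradient (f t) (Alin d h T t x + window h T xbar 0 ((t : ℤ) + 1))) -
          Blin d h T t (gradient (f t) (Alin d h T t y + window h T xbar 0 ((t : ℤ) + 1)))))
        = ∑ t : Fin T, Blin d h T t (w t) :=
      Finset.sum_congr rfl fun t _ => (map_sub _ _ _).symm
    rw [hsum]
    -- per-window Lipschitz bound
    have hwb : ∀ t : Fin T, ‖w t‖ ≤ β * ‖Alin d h T t (x - y)‖ := by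
      intro t
      have := hlip t (Alin d h T t x + window h T xbar 0 ((t : ℤ) + 1))
        (Alin d h T t y + window h T xbar 0 ((t : ℤ) + 1))
      have harg : (Alin d h T t x + window h T xbar 0 ((t : ℤ) + 1)) -
          (Alin d h T t y + window h T xbar 0 ((t : ℤ) + 1)) = Alin d h T t (x - y) := by
        rw [map_sub]; abel
      rw [harg] at this
      exact this
    -- squared estimate
    have hG2 : ‖∑ t : Fin T, Blin d h T t (w t)‖^2 ≤ (β * h * ‖x - y‖)^2 := by
      have hnx : ‖x - y‖^2 = ∑ s : Fin T, ‖(x - y) s‖^2 := PiLp.norm_sq_eq_of_L2 _ _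
      calc ‖∑ t : Fin T, Blin d h T t (w t)‖^2
          = ∑ s : Fin T, ‖(∑ t : Fin T, Blin d h T t (w t)) s‖^2 :=
            PiLp.norm_sq_eq_of_L2 _ _
        _ = ∑ s : Fin T, ‖∑ t : Fin T, Blin d h T t (w t) s‖^2 := by
            refine Finset.sum_congr rfl fun s _ => ?_
            rw [WithLp.ofLp_sum, Finset.sum_apply]
        _ ≤ ∑ s : Fin T, (h:ℝ) * ∑ t : Fin T, ‖Blin d h T t (w t) s‖^2 :=
            Finset.sum_le_sum fun s _ => L1 d h T w s
        _ = (h:ℝ) * ∑ t : Fin T, ∑ s : Fin T, ‖Blin d h T t (w t) s‖^2 := by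
            rw [← Finset.mul_sum, Finset.sum_comm]
        _ ≤ (h:ℝ) * ∑ t : Fin T, ∑ i : Fin h, ‖w t i‖^2 := by
            refine mul_le_mul_of_nonneg_left (Finset.sum_le_sum fun t _ => L2 d h T t (w t))
              (by positivity)
        _ = (h:ℝ) * ∑ t : Fin T, ‖w t‖^2 := by
            congr 1
            exact Finset.sum_congr rfl fun t _ => (PiLp.norm_sq_eq_of_L2 _ _).symm
        _ ≤ (h:ℝ) * ∑ t : Fin T, β^2 * ‖Alin d h T t (x - y)‖^2 := by
            refine mul_le_mul_of_nonneg_left (Finset.sum_le_sum fun t _ => ?_) (by positivity)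
            have h1 := hwb t
            have h2 : (β * ‖Alin d h T t (x - y)‖)^2 = β^2 * ‖Alin d h T t (x - y)‖^2 := by ring
            calc ‖w t‖^2 ≤ (β * ‖Alin d h T t (x - y)‖)^2 := by
                  apply pow_le_pow_left₀ (norm_nonneg _) h1
              _ = β^2 * ‖Alin d h T t (x - y)‖^2 := h2
        _ = (h:ℝ) * β^2 * ∑ t : Fin T, ‖Alin d h T t (x - y)‖^2 := by
            rw [← Finset.mul_sum, mul_assoc]
        _ ≤ (h:ℝ) * β^2 * ((h:ℝ) * ∑ s : Fin T, ‖(x - y) s‖^2) := by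
            refine mul_le_mul_of_nonneg_left (lemD d h T (x - y)) (by positivity)
        _ = (β * h * ‖x - y‖)^2 := by rw [← hnx]; ring
    have hGn : 0 ≤ ‖∑ t : Fin T, Blin d h T t (w t)‖ := norm_nonneg _
    have hRn : 0 ≤ β * h * ‖x - y‖ := by positivity
    nlinarith
end

section
/- Online gradient descent with gradient errors for strongly convex losses: Let X ⊆ ℝ^d be a nonempty closed convex set with ‖a − b‖ ≤ D for all a, b ∈ X, let μ > 0 and set η_t = 1/(tμ) for t ≥ 1. Let h₁, …, h_T : ℝ^d → ℝ be differentiable and μ-strongly convex, let e₁, …, e_T ∈ ℝ^d be arbitrary error vectors, let x₁ ∈ X, and define x_{t+1} = Π_X(x_t − η_t(∇h_t(x_t) + e_t)) for t = 1, …, T. Then for any comparator points x*₁, …, x*_T ∈ X, Σ_{t=1}^T (h_t(x_t) − h_t(x*_t)) ≤ Σ_{t=1}^{T−1} (D/η_t)·‖x*_t − x*_{t+1}‖ + Σ_{t=1}^T D·‖e_t‖ + Σ_{t=1}^T η_t·‖∇h_t(x_t)‖² + Σ_{t=1}^T η_t·‖e_t‖². (This is inequality (A.5) underlying Theorem 1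 of the paper.) -/
open scoped RealInnerProductSpace

set_option maxHeartbeats 1000000


/-- First-order condition for μ-strong convexity. -/
lemma sc_lower {d : ℕ} (μ : ℝ) (f : EuclideanSpace ℝ (Fin d) → ℝ)
    (hf : Differentiable ℝ f)
    (hc : ConvexOn ℝ Set.univ (fun z => f z - μ / 2 * ‖z‖ ^ 2))
    (a b : EuclideanSpace ℝ (Fin d)) :
    f a + ⟪gradient f a, b - a⟫ + μ / 2 * ‖b - a‖ ^ 2 ≤ f b := by
  set v := b - a with hv
  have hcurve : ∀ s : ℝ, HasDerivAt (fun s : ℝ => a + s • v) v s := by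
    intro s
    simpa using ((hasDerivAt_id s).smul_const v).const_add a
  have hφ1 : HasDerivAt (fun s : ℝ => f (a + s • v)) ⟪gradient f a, v⟫ 0 := by
    have hg := (hf (a + (0:ℝ) • v)).hasGradientAt.hasFDerivAt
    have h2 := hg.comp_hasDerivAt 0 (hcurve 0)
    simp only [zero_smul, add_zero] at h2 ⊢
    simp only [Function.comp_def, InnerProductSpace.toDual_apply_apply] at h2 ⊢
    convert h2 using 1
  have hψ : HasDerivAt (fun s : ℝ => ‖a + s • v‖ ^ 2) (2 * ⟪a, v⟫) 0 := by
    have h1 := (hcurve 0).inner ℝ (hcurve 0)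
    simp only [zero_smul, add_zero] at h1
    have h2 : (fun s : ℝ => ‖a + s • v‖ ^ 2) = fun s : ℝ => (⟪a + s • v, a + s • v⟫ : ℝ) := by
      funext s; rw [real_inner_self_eq_norm_sq]
    rw [h2]
    convert h1 using 1
    · rfl
    · rfl
    rw [real_inner_comm]; ring
  have hφ : HasDerivAt (fun s : ℝ => f (a + s • v) - μ / 2 * ‖a + s • v‖ ^ 2)
      (⟪gradient f a, v⟫ - μ / 2 * (2 * ⟪a, v⟫)) 0 := hφ1.sub (hψ.const_mul (μ / 2))
  have hA : ConvexOn ℝ Set.univ (fun s : ℝ => f (a + s • v) - μ / 2 * ‖a + s • v‖ ^ 2) := by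
    have h1 := hc.comp_affineMap (AffineMap.lineMap a b : ℝ →ᵃ[ℝ] EuclideanSpace ℝ (Fin d))
    have heq : ((fun z => f z - μ / 2 * ‖z‖ ^ 2) ∘ (AffineMap.lineMap a b : ℝ →ᵃ[ℝ] EuclideanSpace ℝ (Fin d)))
        = fun s : ℝ => f (a + s • v) - μ / 2 * ‖a + s • v‖ ^ 2 := by
      funext s
      simp [Function.comp, AffineMap.lineMap_apply, hv, add_comm]
    rw [heq] at h1
    simpa using h1
  have hs := hA.le_slope_of_hasDerivAt (Set.mem_univ (0:ℝ)) (Set.mem_univ (1:ℝ)) one_pos hφ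
  rw [slope_def_field] at hs
  have e1 : a + (1:ℝ) • v = b := by rw [one_smul, hv]; abel
  have e0 : a + (0:ℝ) • v = a := by simp
  rw [e1, e0] at hs
  have hid : ‖v‖ ^ 2 = ‖b‖ ^ 2 - ‖a‖ ^ 2 - 2 * ⟪a, v⟫ := by
    have h1 : ‖b - a‖ ^ 2 = ‖b‖ ^ 2 - 2 * ⟪b, a⟫ + ‖a‖ ^ 2 := norm_sub_sq_real b a
    have h2 : ⟪a, v⟫ = ⟪a, b⟫ - ⟪a, a⟫ := by rw [hv, inner_sub_right]
    have h3 : (⟪a, a⟫:ℝ) = ‖a‖ ^ 2 := real_inner_self_eq_norm_sq a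
    have h4 : (⟪b, a⟫:ℝ) = ⟪a, b⟫ := real_inner_comm a b
    rw [hv]; rw [h1, h2, h3, h4]; ring
  have hdiv : ((f b - μ / 2 * ‖b‖ ^ 2) - (f a - μ / 2 * ‖a‖ ^ 2)) / (1 - 0)
      = (f b - μ / 2 * ‖b‖ ^ 2) - (f a - μ / 2 * ‖a‖ ^ 2) := by norm_num
  rw [hdiv] at hs
  have hid2 : μ / 2 * ‖v‖ ^ 2 = μ / 2 * ‖b‖ ^ 2 - μ / 2 * ‖a‖ ^ 2 - μ * ⟪a, v⟫ := by
    rw [hid]; ring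
  linarith [hs, hid2]


/-- The metric projection onto a convex set does not increase distance to set points. -/
lemma proj_dist_le {d : ℕ} {X : Set (EuclideanSpace ℝ (Fin d))} (hXconv : Convex ℝ X)
    (proj : EuclideanSpace ℝ (Fin d) → EuclideanSpace ℝ (Fin d))
    (hproj : ∀ w, proj w ∈ X ∧ ∀ z ∈ X, ‖proj w - w‖ ≤ ‖z - w‖)
    (w z : EuclideanSpace ℝ (Fin d)) (hz : z ∈ X) :
    ‖proj w - z‖ ≤ ‖w - z‖ := by
  set p := proj w with hp
  have hpX : p ∈ X := (hproj w).1
  have hkey : (⟪z - p, w - p⟫ : ℝ) ≤ 0 := by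
    by_contra hcon
    push_neg at hcon
    set c : ℝ := ⟪z - p, w - p⟫ with hcdef
    have hne : (0:ℝ) < ‖z - p‖ ^ 2 := by
      rcases eq_or_ne z p with hzp | hzp
      · exfalso; rw [hcdef, hzp] at hcon; simp at hcon
      · have h0 : (0:ℝ) < ‖z - p‖ := norm_pos_iff.mpr (sub_ne_zero.mpr hzp)
        positivity
    set t : ℝ := min 1 (c / ‖z - p‖ ^ 2) with ht
    have ht0 : 0 < t := lt_min one_pos (div_pos hcon hne)
    have ht1 : t ≤ 1 := min_le_left _ _
    have hmem : p + t • (z - p) ∈ X := by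
      have hcc := hXconv hpX hz (by linarith : (0:ℝ) ≤ 1 - t) ht0.le (by ring)
      have heq : (1 - t) • p + t • z = p + t • (z - p) := by
        rw [smul_sub, sub_smul, one_smul]; abel
      rwa [heq] at hcc
    have hle := (hproj w).2 _ hmem
    rw [← hp] at hle
    have hsq : ‖p - w‖ ^ 2 ≤ ‖p + t • (z - p) - w‖ ^ 2 := by
      have := pow_le_pow_left₀ (norm_nonneg _) hle 2
      exact this
    have hexp : ‖p + t • (z - p) - w‖ ^ 2 = ‖p - w‖ ^ 2 - 2 * t * c + t ^ 2 * ‖z - p‖ ^ 2 := by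
      have hrw : p + t • (z - p) - w = (p - w) + t • (z - p) := by abel
      rw [hrw, norm_add_sq_real, real_inner_smul_right, norm_smul]
      have h1 : (⟪p - w, z - p⟫ : ℝ) = -c := by
        rw [hcdef, real_inner_comm]
        rw [show p - w = -(w - p) by abel, inner_neg_right]
      rw [h1]
      simp [Real.norm_eq_abs, mul_pow, sq_abs]
      ring
    have h2 : 2 * t * c ≤ t ^ 2 * ‖z - p‖ ^ 2 := by nlinarith [hsq, hexp]
    have h3 : t * ‖z - p‖ ^ 2 ≤ c := by
      have hmin : t ≤ c / ‖z - p‖ ^ 2 := min_le_right _ _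
      calc t * ‖z - p‖ ^ 2 ≤ (c / ‖z - p‖ ^ 2) * ‖z - p‖ ^ 2 :=
            mul_le_mul_of_nonneg_right hmin hne.le
        _ = c := div_mul_cancel₀ _ (ne_of_gt hne)
    nlinarith [h2, h3, ht0, hcon]
  have hexp2 : ‖w - z‖ ^ 2 = ‖w - p‖ ^ 2 - 2 * ⟪z - p, w - p⟫ + ‖p - z‖ ^ 2 := by
    have hrw : w - z = (w - p) - (z - p) := by abel
    rw [hrw, norm_sub_sq_real]
    have h1 : (⟪w - p, z - p⟫ : ℝ) = ⟪z - p, w - p⟫ := real_inner_comm _ _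
    have h2 : ‖p - z‖ = ‖z - p‖ := norm_sub_rev p z
    rw [h1, h2]
  have hsq2 : ‖p - z‖ ^ 2 ≤ ‖w - z‖ ^ 2 := by nlinarith [hexp2, hkey, sq_nonneg ‖w - p‖]
  nlinarith [hsq2, norm_nonneg (p - z), norm_nonneg (w - z)]

/-- Telescoping helper. -/
lemma tele_aux (c r s B : ℕ → ℝ) (hc0 : c 0 = 0) :
    ∀ n : ℕ, (∀ t, 1 ≤ t → t < n → c t * r (t + 1) ≤ c t * s t + B t) →
    (∑ t ∈ Finset.Icc 1 n, (c (t - 1) * r t - c t * s t)) + c n * s n ≤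
      ∑ t ∈ Finset.Icc 1 (n - 1), B t := by
  intro n
  induction n with
  | zero => intro _; simp [hc0]
  | succ m ih =>
    intro hstep
    rw [Finset.sum_Icc_succ_top (Nat.le_add_left 1 m)]
    simp only [Nat.add_sub_cancel]
    have ihm := ih (fun t h1 h2 => hstep t h1 (h2.trans (Nat.lt_succ_self m)))
    rcases Nat.eq_zero_or_pos m with hm | hm
    · subst hm
      simp [hc0]
    · have hlast := hstep m hm (Nat.lt_succ_self m)
      have hsum : ∑ t ∈ Finset.Icc 1 m, B t = (∑ t ∈ Finset.Icc 1 (m - 1), B t) + B m := by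
        have hm1 : m = (m - 1) + 1 := by omega
        conv_lhs => rw [hm1]
        rw [Finset.sum_Icc_succ_top (by omega : 1 ≤ (m - 1) + 1), ← hm1]
      rw [hsum]
      linarith [ihm, hlast]

/-- Regret bound for online gradient descent with gradient errors on
strongly convex losses: with step sizes `η_t = 1/(tμ)`, projections onto a closed convex
set `X` of diameter at most `D`, losses `h_t` that are differentiable and `μ`-strongly
convex, error vectors `e_t`, and iterates `x_{t+1} = Π_X(x_t − η_t(∇h_t(x_t) + e_t))`
starting from `x₁ ∈ X`, for any comparators `x*_t ∈ X`:
`∑_{t=1}^T (h_t(x_t) − h_t(x*_t)) ≤ ∑_{t=1}^{T−1} (D/η_t)‖x*_t − x*_{t+1}‖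
  + ∑_{t=1}^T D‖e_t‖ + ∑_{t=1}^T η_t‖∇h_t(x_t)‖² + ∑_{t=1}^T η_t‖e_t‖²`. -/
theorem ogd_with_errors_regret {d : ℕ} (X : Set (EuclideanSpace ℝ (Fin d)))
    (hXne : X.Nonempty) (hXcl : IsClosed X) (hXconv : Convex ℝ X)
    (D : ℝ) (hD : ∀ a ∈ X, ∀ b ∈ X, ‖a - b‖ ≤ D)
    (μ : ℝ) (hμ : 0 < μ) (T : ℕ)
    (h : ℕ → EuclideanSpace ℝ (Fin d) → ℝ)
    (hdiff : ∀ t, 1 ≤ t → t ≤ T → Differentiable ℝ (h t))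
    (hsc : ∀ t, 1 ≤ t → t ≤ T →
      ConvexOn ℝ Set.univ (fun z => h t z - μ / 2 * ‖z‖ ^ 2))
    (e : ℕ → EuclideanSpace ℝ (Fin d))
    (proj : EuclideanSpace ℝ (Fin d) → EuclideanSpace ℝ (Fin d))
    (hproj : ∀ w, proj w ∈ X ∧ ∀ z ∈ X, ‖proj w - w‖ ≤ ‖z - w‖)
    (x : ℕ → EuclideanSpace ℝ (Fin d)) (hx1 : x 1 ∈ X)
    (hupd : ∀ t, 1 ≤ t → t ≤ T →
      x (t + 1) = proj (x t - (1 / (t * μ)) • (gradient (h t) (x t) + e t)))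
    (xstar : ℕ → EuclideanSpace ℝ (Fin d))
    (hxstar : ∀ t, 1 ≤ t → t ≤ T → xstar t ∈ X) :
    (∑ t ∈ Finset.Icc 1 T, (h t (x t) - h t (xstar t))) ≤
      (∑ t ∈ Finset.Icc 1 (T - 1), D / (1 / (t * μ)) * ‖xstar t - xstar (t + 1)‖) +
        (∑ t ∈ Finset.Icc 1 T, D * ‖e t‖) +
        (∑ t ∈ Finset.Icc 1 T, (1 / (t * μ)) * ‖gradient (h t) (x t)‖ ^ 2) +
        ∑ t ∈ Finset.Icc 1 T, (1 / (t * μ)) * ‖e t‖ ^ 2 := by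
  obtain ⟨a0, ha0⟩ := hXne
  have hD0 : 0 ≤ D := by have := hD a0 ha0 a0 ha0; simpa using this
  have hmem : ∀ t, 1 ≤ t → t ≤ T → x (t + 1) ∈ X := by
    intro t h1 h2; rw [hupd t h1 h2]; exact (hproj _).1
  have hmem' : ∀ t, 1 ≤ t → t ≤ T → x t ∈ X := by
    intro t h1 h2
    match t, h1 with
    | 1, _ => exact hx1
    | (r + 2), _ => exact hmem (r + 1) (by omega) (by omega)
  -- per-step inequality
  have key : ∀ t, 1 ≤ t → t ≤ T →
      h t (x t) - h t (xstar t) ≤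
        (((t - 1 : ℕ) : ℝ) * μ / 2 * ‖x t - xstar t‖ ^ 2
           - (t : ℝ) * μ / 2 * ‖x (t + 1) - xstar t‖ ^ 2)
        + (D * ‖e t‖ + (1 / ((t : ℝ) * μ)) * ‖gradient (h t) (x t)‖ ^ 2
           + (1 / ((t : ℝ) * μ)) * ‖e t‖ ^ 2) := by
    intro t h1 h2
    set g := gradient (h t) (x t) with hgdef
    set η : ℝ := 1 / ((t : ℝ) * μ) with hη
    have htR : (1 : ℝ) ≤ (t : ℝ) := by exact_mod_cast h1
    have htμ : 0 < (t : ℝ) * μ := mul_pos (by linarith) hμ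
    have hηpos : 0 < η := by rw [hη]; positivity
    have hη1 : ((t : ℝ) * μ) * η = 1 := by rw [hη]; field_simp
    -- strong convexity
    have hsc' := sc_lower μ (h t) (hdiff t h1 h2) (hsc t h1 h2) (x t) (xstar t)
    -- projection step
    have hproj' : ‖x (t + 1) - xstar t‖ ≤ ‖(x t - η • (g + e t)) - xstar t‖ := by
      rw [hupd t h1 h2]
      exact proj_dist_le hXconv proj hproj _ _ (hxstar t h1 h2)
    have hsq' : ‖x (t + 1) - xstar t‖ ^ 2 ≤ ‖(x t - η • (g + e t)) - xstar t‖ ^ 2 :=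
      pow_le_pow_left₀ (norm_nonneg _) hproj' 2
    have hexp : ‖(x t - η • (g + e t)) - xstar t‖ ^ 2
        = ‖x t - xstar t‖ ^ 2
          - 2 * η * (⟪g, x t - xstar t⟫ + ⟪e t, x t - xstar t⟫)
          + η ^ 2 * ‖g + e t‖ ^ 2 := by
      have hrw : (x t - η • (g + e t)) - xstar t = (x t - xstar t) - η • (g + e t) := by abel
      rw [hrw, norm_sub_sq_real, real_inner_smul_right, norm_smul]
      have hi : (⟪x t - xstar t, g + e t⟫ : ℝ) = ⟪g, x t - xstar t⟫ + ⟪e t, x t - xstar t⟫ := by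
        rw [inner_add_right, real_inner_comm (x t - xstar t) g,
          real_inner_comm (x t - xstar t) (e t)]
      rw [hi]
      simp [Real.norm_eq_abs, mul_pow, sq_abs]
      ring
    have hbound_e : -(⟪e t, x t - xstar t⟫ : ℝ) ≤ ‖e t‖ * D := by
      have hle := real_inner_le_norm (e t) (xstar t - x t)
      have hDd : ‖xstar t - x t‖ ≤ D := hD _ (hxstar t h1 h2) _ (hmem' t h1 h2)
      have hflip : (⟪e t, xstar t - x t⟫ : ℝ) = -⟪e t, x t - xstar t⟫ := by
        rw [show xstar t - x t = -(x t - xstar t) by abel, inner_neg_right]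
      nlinarith [norm_nonneg (e t)]
    have hge : ‖g + e t‖ ^ 2 ≤ 2 * ‖g‖ ^ 2 + 2 * ‖e t‖ ^ 2 := by
      have hna := norm_add_le g (e t)
      nlinarith [hna, sq_nonneg (‖g‖ - ‖e t‖), norm_nonneg (g + e t), norm_nonneg g,
        norm_nonneg (e t)]
    have hN' : (η / 2) * ‖g + e t‖ ^ 2 ≤ η * ‖g‖ ^ 2 + η * ‖e t‖ ^ 2 := by nlinarith
    have hP : (⟪g, x t - xstar t⟫ : ℝ)
        ≤ (t : ℝ) * μ / 2 * (‖x t - xstar t‖ ^ 2 - ‖x (t + 1) - xstar t‖ ^ 2)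
          + η * ‖g‖ ^ 2 + η * ‖e t‖ ^ 2 + ‖e t‖ * D := by
      have hmul := mul_le_mul_of_nonneg_left (hsq'.trans_eq hexp)
        (le_of_lt (by positivity : (0 : ℝ) < (t : ℝ) * μ / 2))
      have hring : ((t : ℝ) * μ / 2) * (‖x t - xstar t‖ ^ 2
            - 2 * η * (⟪g, x t - xstar t⟫ + ⟪e t, x t - xstar t⟫) + η ^ 2 * ‖g + e t‖ ^ 2)
          = (t : ℝ) * μ / 2 * ‖x t - xstar t‖ ^ 2
            - (((t : ℝ) * μ) * η) * (⟪g, x t - xstar t⟫ + ⟪e t, x t - xstar t⟫)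
            + (((t : ℝ) * μ) * η) * ((η / 2) * ‖g + e t‖ ^ 2) := by ring
      rw [hring, hη1, one_mul, one_mul] at hmul
      linarith [hmul, hbound_e, hN']
    have hcast : ((t - 1 : ℕ) : ℝ) = (t : ℝ) - 1 := by
      have := Nat.cast_sub h1 (R := ℝ); simpa using this
    have hflipg : (⟪g, xstar t - x t⟫ : ℝ) = -⟪g, x t - xstar t⟫ := by
      rw [show xstar t - x t = -(x t - xstar t) by abel, inner_neg_right]
    have hnormsym : ‖xstar t - x t‖ = ‖x t - xstar t‖ := norm_sub_rev _ _
    rw [hcast]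
    rw [hflipg, hnormsym] at hsc'
    linarith [hsc', hP]
  -- telescoping
  have hstep : ∀ t, 1 ≤ t → t < T →
      ((t : ℝ) * μ / 2) * ‖x (t + 1) - xstar (t + 1)‖ ^ 2
        ≤ ((t : ℝ) * μ / 2) * ‖x (t + 1) - xstar t‖ ^ 2
          + (t : ℝ) * μ * D * ‖xstar t - xstar (t + 1)‖ := by
    intro t h1 h2
    have hu : x (t + 1) ∈ X := hmem t h1 (le_of_lt h2)
    have hx1' : xstar (t + 1) ∈ X := hxstar (t + 1) (by omega) (by omega)
    have hx0' : xstar t ∈ X := hxstar t h1 (by omega)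
    have h1' : ‖x (t + 1) - xstar (t + 1)‖ ≤ D := hD _ hu _ hx1'
    have h2' : ‖x (t + 1) - xstar t‖ ≤ D := hD _ hu _ hx0'
    have h3' : ‖x (t + 1) - xstar (t + 1)‖ - ‖x (t + 1) - xstar t‖
        ≤ ‖xstar t - xstar (t + 1)‖ := by
      have hns := norm_sub_norm_le (x (t + 1) - xstar (t + 1)) (x (t + 1) - xstar t)
      have huv : (x (t + 1) - xstar (t + 1)) - (x (t + 1) - xstar t)
          = xstar t - xstar (t + 1) := by abel
      rwa [huv] at hns
    have htR : (1 : ℝ) ≤ (t : ℝ) := by exact_mod_cast h1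
    have hA : ‖x (t + 1) - xstar (t + 1)‖ ^ 2 - ‖x (t + 1) - xstar t‖ ^ 2
        ≤ 2 * D * ‖xstar t - xstar (t + 1)‖ := by
      nlinarith [mul_le_mul_of_nonneg_right h3'
          (add_nonneg (norm_nonneg (x (t + 1) - xstar (t + 1))) (norm_nonneg (x (t + 1) - xstar t))),
        norm_nonneg (x (t + 1) - xstar (t + 1)), norm_nonneg (x (t + 1) - xstar t),
        norm_nonneg (xstar t - xstar (t + 1))]
    have hct : (0 : ℝ) ≤ (t : ℝ) * μ / 2 := by positivity
    nlinarith [mul_le_mul_of_nonneg_left hA hct]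
  have htele := tele_aux (fun t => (t : ℝ) * μ / 2) (fun t => ‖x t - xstar t‖ ^ 2)
      (fun t => ‖x (t + 1) - xstar t‖ ^ 2)
      (fun t => (t : ℝ) * μ * D * ‖xstar t - xstar (t + 1)‖) (by norm_num) T hstep
  have hsT : (0 : ℝ) ≤ ((T : ℝ) * μ / 2) * ‖x (T + 1) - xstar T‖ ^ 2 := by positivity
  -- sum of per-step inequalities
  have hsum1 : (∑ t ∈ Finset.Icc 1 T, (h t (x t) - h t (xstar t)))
      ≤ (∑ t ∈ Finset.Icc 1 T,
          (((t - 1 : ℕ) : ℝ) * μ / 2 * ‖x t - xstar t‖ ^ 2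
            - (t : ℝ) * μ / 2 * ‖x (t + 1) - xstar t‖ ^ 2))
        + (∑ t ∈ Finset.Icc 1 T,
          (D * ‖e t‖ + (1 / ((t : ℝ) * μ)) * ‖gradient (h t) (x t)‖ ^ 2
            + (1 / ((t : ℝ) * μ)) * ‖e t‖ ^ 2)) := by
    rw [← Finset.sum_add_distrib]
    apply Finset.sum_le_sum
    intro t ht
    rw [Finset.mem_Icc] at ht
    exact key t ht.1 ht.2
  have hB : ∑ t ∈ Finset.Icc 1 (T - 1), (t : ℝ) * μ * D * ‖xstar t - xstar (t + 1)‖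
      = ∑ t ∈ Finset.Icc 1 (T - 1), D / (1 / (t * μ)) * ‖xstar t - xstar (t + 1)‖ := by
    apply Finset.sum_congr rfl
    intro t ht
    rw [Finset.mem_Icc] at ht
    have htR : (1 : ℝ) ≤ (t : ℝ) := by exact_mod_cast ht.1
    have htμ : ((t : ℝ) * μ) ≠ 0 := by positivity
    rw [one_div, div_inv_eq_mul]
    ring
  have hsplit : (∑ t ∈ Finset.Icc 1 T,
        (D * ‖e t‖ + (1 / ((t : ℝ) * μ)) * ‖gradient (h t) (x t)‖ ^ 2
          + (1 / ((t : ℝ) * μ)) * ‖e t‖ ^ 2))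
      = (∑ t ∈ Finset.Icc 1 T, D * ‖e t‖)
        + (∑ t ∈ Finset.Icc 1 T, (1 / ((t : ℝ) * μ)) * ‖gradient (h t) (x t)‖ ^ 2)
        + ∑ t ∈ Finset.Icc 1 T, (1 / ((t : ℝ) * μ)) * ‖e t‖ ^ 2 := by
    rw [← Finset.sum_add_distrib, ← Finset.sum_add_distrib]
  rw [hsplit] at hsum1
  have htele' : (∑ t ∈ Finset.Icc 1 T,
        (((t - 1 : ℕ) : ℝ) * μ / 2 * ‖x t - xstar t‖ ^ 2
          - (t : ℝ) * μ / 2 * ‖x (t + 1) - xstar t‖ ^ 2))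
      ≤ ∑ t ∈ Finset.Icc 1 (T - 1), D / (1 / (t * μ)) * ‖xstar t - xstar (t + 1)‖ := by
    rw [← hB]
    have := htele
    linarith [hsT, this]
  linarith [hsum1, htele']
end

section
/- One step of projected gradient descent with gradient error on a strongly convex function: Let X ⊆ ℝ^d be a nonempty closed convex set, let h : ℝ^d → ℝ be differentiable and μ-strongly convex with μ > 0, let x ∈ ℝ^d, x* ∈ X, e ∈ ℝ^d, η > 0, and set x⁺ = Π_X(x − η(∇h(x) + e)). Then h(x) − h(x*) ≤ (‖x* − x‖² − ‖x* − x⁺‖²)/(2η) + ⟨x* − x, e⟩ + η‖∇h(x)‖² + η‖e‖² − (μ/2)‖x − x*‖². -/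
open scoped RealInnerProductSpace

open Set

variable {E : Type*} [NormedAddCommGroup E] [InnerProductSpace ℝ E] [CompleteSpace E]

lemma grad_ineq_aux {f : E → ℝ} {g x : E} (y : E) (hg : HasGradientAt f g x)
    (hc : ConvexOn ℝ Set.univ f) : f x + ⟪g, y - x⟫ ≤ f y := by
  set φ : ℝ → ℝ := fun t => f (x + t • (y - x)) with hφ
  have hφc : ConvexOn ℝ Set.univ φ := by
    have h1 := hc.comp_affineMap (AffineMap.lineMap x y : ℝ →ᵃ[ℝ] E)
    have h2 : ((AffineMap.lineMap x y : ℝ →ᵃ[ℝ] E)) ⁻¹' univ = univ := by simp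
    rw [h2] at h1
    have hfun : φ = f ∘ (AffineMap.lineMap x y : ℝ →ᵃ[ℝ] E) := by
      funext t
      simp [φ, AffineMap.lineMap_apply, add_comm]
    rw [hfun]; exact h1
  have hline : HasDerivAt (fun t : ℝ => x + t • (y - x)) (y - x) 0 := by
    simpa using ((hasDerivAt_id (0:ℝ)).smul_const (y - x)).const_add x
  have hfd : HasFDerivAt f (InnerProductSpace.toDual ℝ E g) x :=
    (hasGradientAt_iff_hasFDerivAt).mp hg
  have hφd : HasDerivAt φ ⟪g, y - x⟫ 0 := by
    have hfd' : HasFDerivAt f (InnerProductSpace.toDual ℝ E g) (x + (0:ℝ) • (y - x)) := by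
      simpa using hfd
    have := HasFDerivAt.comp_hasDerivAt (0:ℝ) hfd' hline
    simp only [InnerProductSpace.toDual_apply_apply] at this
    exact this
  have hs := hφc.le_slope_of_hasDerivAt (mem_univ (0:ℝ)) (mem_univ (1:ℝ)) one_pos hφd
  have : slope φ 0 1 = f y - f x := by
    simp [slope_def_field, φ]
  rw [this] at hs
  linarith

lemma grad_sc {h : E → ℝ} {μ : ℝ} (hdiff : Differentiable ℝ h) (x : E) :
    HasGradientAt (fun z => h z - μ / 2 * ‖z‖ ^ 2) (gradient h x - μ • x) x := by
  rw [hasGradientAt_iff_hasFDerivAt]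
  have h1 : HasFDerivAt h (InnerProductSpace.toDual ℝ E (gradient h x)) x :=
    (hasGradientAt_iff_hasFDerivAt).mp (hdiff x).hasGradientAt
  have h2 : HasFDerivAt (fun z : E => μ / 2 * ‖z‖ ^ 2)
      (InnerProductSpace.toDual ℝ E (μ • x)) x := by
    have hin : HasFDerivAt (fun z : E => ⟪z, z⟫)
        ((fderivInnerCLM ℝ (x, x)).comp ((ContinuousLinearMap.id ℝ E).prod
          (ContinuousLinearMap.id ℝ E))) x :=
      (hasFDerivAt_id x).inner ℝ (hasFDerivAt_id x)
    have heq : ∀ z : E, μ / 2 * ‖z‖ ^ 2 = μ / 2 * ⟪z, z⟫ := by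
      intro z; rw [real_inner_self_eq_norm_sq]
    have := hin.const_mul (μ / 2)
    refine HasFDerivAt.congr_fderiv (by simpa [heq] using this) ?_
    ext v
    simp [fderivInnerCLM_apply, InnerProductSpace.toDual_apply_apply, real_inner_smul_left,
      real_inner_comm]
    ring
  have := h1.sub h2
  refine this.congr_fderiv ?_
  ext v
  simp [InnerProductSpace.toDual_apply_apply, inner_sub_left, real_inner_smul_left]

set_option maxHeartbeats 1000000 in
/-- One step of projected gradient descent with gradient error on a
`μ`-strongly convex differentiable function `h`: for `x⁺ = Π_X(x − η(∇h(x) + e))` and any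
`x* ∈ X`,
`h(x) − h(x*) ≤ (‖x* − x‖² − ‖x* − x⁺‖²)/(2η) + ⟨x* − x, e⟩ + η‖∇h(x)‖² + η‖e‖²
  − (μ/2)‖x − x*‖²`. -/
theorem pgd_one_step {d : ℕ} (X : Set (EuclideanSpace ℝ (Fin d)))
    (hXne : X.Nonempty) (hXcl : IsClosed X) (hXconv : Convex ℝ X)
    (h : EuclideanSpace ℝ (Fin d) → ℝ) (μ : ℝ) (hμ : 0 < μ)
    (hdiff : Differentiable ℝ h)
    (hsc : ConvexOn ℝ Set.univ (fun z => h z - μ / 2 * ‖z‖ ^ 2))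
    (x xstar : EuclideanSpace ℝ (Fin d)) (hxstar : xstar ∈ X)
    (e : EuclideanSpace ℝ (Fin d)) (η : ℝ) (hη : 0 < η)
    (proj : EuclideanSpace ℝ (Fin d) → EuclideanSpace ℝ (Fin d))
    (hproj : ∀ w, proj w ∈ X ∧ ∀ z ∈ X, ‖proj w - w‖ ≤ ‖z - w‖)
    (xplus : EuclideanSpace ℝ (Fin d))
    (hxplus : xplus = proj (x - η • (gradient h x + e))) :
    h x - h xstar ≤
      (‖xstar - x‖ ^ 2 - ‖xstar - xplus‖ ^ 2) / (2 * η) + ⟪xstar - x, e⟫ +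
        η * ‖gradient h x‖ ^ 2 + η * ‖e‖ ^ 2 - μ / 2 * ‖x - xstar‖ ^ 2 := by
  set g := gradient h x with hg
  set w := x - η • (g + e) with hw
  -- strong convexity inequality
  have hA0 := grad_ineq_aux xstar (grad_sc (μ := μ) hdiff x) hsc
  simp only [inner_sub_left, real_inner_smul_left, real_inner_comm x (xstar - x)] at hA0
  have e1 : μ * ⟪x, xstar - x⟫ = μ * ⟪x, xstar⟫ - μ * ‖x‖ ^ 2 := by
    rw [inner_sub_right, real_inner_self_eq_norm_sq]; ring
  have e2 : μ / 2 * ‖x - xstar‖ ^ 2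
      = μ / 2 * ‖x‖ ^ 2 - μ * ⟪x, xstar⟫ + μ / 2 * ‖xstar‖ ^ 2 := by
    rw [norm_sub_sq_real]; ring
  have hcomm : ⟪g, xstar - x⟫ = ⟪xstar - x, g⟫ := real_inner_comm _ _
  have hA : h x - h xstar ≤ -⟪xstar - x, g⟫ - μ / 2 * ‖x - xstar‖ ^ 2 := by
    rw [hcomm] at hA0
    linarith [hA0]
  -- projection variational inequality
  have hxpX : xplus ∈ X := hxplus ▸ (hproj w).1
  have hmin : ∀ z ∈ X, ‖xplus - w‖ ≤ ‖z - w‖ := hxplus ▸ (hproj w).2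
  haveI : Nonempty X := ⟨⟨xplus, hxpX⟩⟩
  have hinf : ‖w - xplus‖ = ⨅ z : X, ‖w - z‖ := by
    refine le_antisymm (le_ciInf fun z => ?_) ?_
    · rw [norm_sub_rev w xplus, norm_sub_rev w z]
      exact hmin z z.2
    · exact ciInf_le ⟨0, fun _ ⟨z, hz⟩ => hz ▸ norm_nonneg _⟩ (⟨xplus, hxpX⟩ : X)
  have hVI : ⟪w - xplus, xstar - xplus⟫ ≤ 0 :=
    (norm_eq_iInf_iff_real_inner_le_zero hXconv hxpX).mp hinf xstar hxstar
  -- contraction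
  have hB : ‖xstar - xplus‖ ^ 2 ≤ ‖xstar - w‖ ^ 2 := by
    have heq3 : xstar - w = (xstar - xplus) - (w - xplus) := by abel
    have hexp : ‖xstar - w‖ ^ 2 =
        ‖xstar - xplus‖ ^ 2 - 2 * ⟪xstar - xplus, w - xplus⟫ + ‖w - xplus‖ ^ 2 := by
      rw [heq3, norm_sub_sq_real]
    have hcomm2 : ⟪xstar - xplus, w - xplus⟫ = ⟪w - xplus, xstar - xplus⟫ :=
      real_inner_comm _ _
    nlinarith [sq_nonneg ‖w - xplus‖]
  -- expand ‖xstar - w‖²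
  have hgesq : ‖g + e‖ ^ 2 ≤ 2 * ‖g‖ ^ 2 + 2 * ‖e‖ ^ 2 := by
    have h0 : (0:ℝ) ≤ ‖g - e‖ ^ 2 := sq_nonneg _
    rw [norm_sub_sq_real] at h0
    rw [norm_add_sq_real]
    linarith
  have hexp2 : ‖xstar - w‖ ^ 2 = ‖xstar - x‖ ^ 2 + 2 * η * (⟪xstar - x, g⟫ + ⟪xstar - x, e⟫)
      + η ^ 2 * ‖g + e‖ ^ 2 := by
    have heq4 : xstar - w = (xstar - x) + η • (g + e) := by rw [hw]; abel
    rw [heq4, norm_add_sq_real, real_inner_smul_right, inner_add_right, norm_smul]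
    simp only [Real.norm_eq_abs, mul_pow, sq_abs]
    ring
  set P := ⟪xstar - x, g⟫ with hP
  set Q := ⟪xstar - x, e⟫ with hQ
  set NG := ‖g‖ ^ 2 with hNG
  set NE := ‖e‖ ^ 2 with hNE
  set S1 := ‖xstar - x‖ ^ 2 with hS1
  set S2 := ‖xstar - xplus‖ ^ 2 with hS2
  clear_value P Q NG NE S1 S2
  have hBfull : S2 ≤ S1 + 2 * η * (P + Q) + η ^ 2 * (2 * NG + 2 * NE) := by
    calc S2 ≤ ‖xstar - w‖ ^ 2 := hB
    _ = S1 + 2 * η * (P + Q) + η ^ 2 * ‖g + e‖ ^ 2 := hexp2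
    _ ≤ S1 + 2 * η * (P + Q) + η ^ 2 * (2 * NG + 2 * NE) := by nlinarith [sq_nonneg η]
  have hD : -P - Q - η * NG - η * NE ≤ (S1 - S2) / (2 * η) := by
    rw [le_div_iff₀ (by positivity)]
    nlinarith [hBfull]
  linarith [hA, hD]
end

section
/- Descent inequality for projected gradient steps with an inexact gradient: Let C : ℝ^n → ℝ be differentiable with β′-Lipschitz gradient and μ-strongly convex (μ > 0). Let X ⊆ ℝ^n be nonempty, closed and convex, let x, g ∈ ℝ^n, and set x⁺ = Π_X(x − (1/β′)g). Then for every y ∈ X, C(x⁺) − C(y) ≤ β′⟨x − x⁺, x − y⟩ − (β′/2)‖x⁺ − x‖² − (μ/2)‖x − y‖² + ⟨∇C(x) − g, x⁺ − y⟩. (This is inequality (B.1) underlying Theorem 2 of the paper.) -/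
open scoped RealInnerProductSpace

section Aux

variable {n : ℕ}

local notation "E" => EuclideanSpace ℝ (Fin n)

/-- Derivative of `t ↦ f (a + t • v)` via the gradient. -/
lemma hasDerivAt_comp_line {f : E → ℝ} (hf : Differentiable ℝ f) (a v : E) (t : ℝ) :
    HasDerivAt (fun s : ℝ => f (a + s • v)) ⟪gradient f (a + t • v), v⟫ t := by
  have hL : HasDerivAt (fun s : ℝ => a + s • v) v t := by
    simpa using ((hasDerivAt_id t).smul_const v).const_add a
  have hg := hasGradientAt_iff_hasFDerivAt.mp (hf (a + t • v)).hasGradientAt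
  have this : HasDerivAt (fun s : ℝ => f (a + s • v)) _ t := hg.comp_hasDerivAt t hL
  simpa [InnerProductSpace.toDual_apply_apply] using this

/-- First-order condition for a convex differentiable function. -/
lemma first_order {f : E → ℝ} (hf : Differentiable ℝ f)
    (hc : ConvexOn ℝ Set.univ f) (a b : E) :
    f a + ⟪gradient f a, b - a⟫ ≤ f b := by
  have hline : ConvexOn ℝ Set.univ fun t : ℝ => f (a + t • (b - a)) := by
    have h := hc.comp_affineMap (AffineMap.lineMap a b : ℝ →ᵃ[ℝ] E)
    have heq : (f ∘ (AffineMap.lineMap a b : ℝ →ᵃ[ℝ] E)) = fun t : ℝ => f (a + t • (b - a)) := by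
      funext t
      simp [Function.comp, AffineMap.lineMap_apply_module]
      congr 1
      module
    rw [heq, Set.preimage_univ] at h
    exact h
  have hd := hasDerivAt_comp_line hf a (b - a) 0
  simp only [zero_smul, add_zero] at hd
  have hs := hline.le_slope_of_hasDerivAt (Set.mem_univ 0) (Set.mem_univ 1)
    one_pos hd
  have hval : slope (fun t : ℝ => f (a + t • (b - a))) 0 1 = f b - f a := by
    rw [slope_def_field]
    norm_num
  rw [hval] at hs
  linarith

/-- Descent lemma for a function with Lipschitz gradient. -/
lemma descent_lemma {f : E → ℝ} (hf : Differentiable ℝ f) {β : ℝ}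
    (hlip : ∀ z w, ‖gradient f z - gradient f w‖ ≤ β * ‖z - w‖) (a b : E) :
    f b ≤ f a + ⟪gradient f a, b - a⟫ + β / 2 * ‖b - a‖ ^ 2 := by
  set v := b - a with hv
  set G : ℝ → ℝ := fun t => f (a + t • v) - t * ⟪gradient f a, v⟫ - β / 2 * ‖v‖ ^ 2 * t ^ 2
    with hG
  have hGd : ∀ t : ℝ, HasDerivAt G
      (⟪gradient f (a + t • v), v⟫ - ⟪gradient f a, v⟫ - β / 2 * ‖v‖ ^ 2 * (2 * t)) t := by
    intro t
    have h1 := hasDerivAt_comp_line hf a v t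
    have h2 : HasDerivAt (fun s : ℝ => s * ⟪gradient f a, v⟫) ⟪gradient f a, v⟫ t :=
      hasDerivAt_mul_const _
    have h3 : HasDerivAt (fun s : ℝ => β / 2 * ‖v‖ ^ 2 * s ^ 2)
        (β / 2 * ‖v‖ ^ 2 * (2 * t)) t := by
      simpa [mul_comm] using (hasDerivAt_pow 2 t).const_mul (β / 2 * ‖v‖ ^ 2)
    simpa [hG, Pi.sub_def] using (h1.sub h2).sub h3
  have hanti : AntitoneOn G (Set.Icc 0 1) := by
    apply antitoneOn_of_deriv_nonpos (convex_Icc 0 1)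
    · exact (Continuous.continuousOn (by
        have := hf.continuous; fun_prop) : ContinuousOn G _)
    · intro t _
      exact (hGd t).differentiableAt.differentiableWithinAt
    · intro t ht
      rw [interior_Icc] at ht
      rw [(hGd t).deriv]
      have key : ⟪gradient f (a + t • v) - gradient f a, v⟫ ≤ β * t * ‖v‖ ^ 2 := by
        calc ⟪gradient f (a + t • v) - gradient f a, v⟫
            ≤ ‖gradient f (a + t • v) - gradient f a‖ * ‖v‖ := real_inner_le_norm _ _
          _ ≤ β * ‖(a + t • v) - a‖ * ‖v‖ := by
              have := hlip (a + t • v) a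
              nlinarith [norm_nonneg v]
          _ = β * t * ‖v‖ ^ 2 := by
              rw [add_sub_cancel_left, norm_smul, Real.norm_eq_abs,
                abs_of_pos ht.1]; ring
      rw [inner_sub_left] at key
      nlinarith
  have h01 := hanti (Set.left_mem_Icc.mpr zero_le_one) (Set.right_mem_Icc.mpr zero_le_one)
    zero_le_one
  simp only [hG, zero_smul, add_zero, one_smul, zero_mul, zero_pow, mul_zero, sub_zero,
    one_pow, mul_one, one_mul] at h01
  have hb : a + v = b := by simp [hv]
  rw [hb] at h01
  linarith

/-- First-order condition for a `μ`-strongly convex differentiable function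
(also valid with `μ = 0`, i.e. plain convexity). -/
lemma first_order_sc {f : E → ℝ} (hf : Differentiable ℝ f) {μ : ℝ}
    (hsc : ConvexOn ℝ Set.univ fun z => f z - μ / 2 * ‖z‖ ^ 2) (a b : E) :
    f a + ⟪gradient f a, b - a⟫ + μ / 2 * ‖b - a‖ ^ 2 ≤ f b := by
  set v := b - a with hv
  set φ : E → ℝ := fun z => f z - μ / 2 * ‖z‖ ^ 2 with hφ
  -- convexity of the composition with the line
  have hline : ConvexOn ℝ Set.univ fun t : ℝ => φ (a + t • v) := by
    have h := hsc.comp_affineMap (AffineMap.lineMap a b : ℝ →ᵃ[ℝ] E)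
    have heq : (φ ∘ (AffineMap.lineMap a b : ℝ →ᵃ[ℝ] E)) = fun t : ℝ => φ (a + t • v) := by
      funext t
      simp only [Function.comp, AffineMap.lineMap_apply_module, hv]
      congr 1
      module
    rw [heq, Set.preimage_univ] at h
    exact h
  -- derivative of the quadratic part
  have hquad : HasDerivAt (fun t : ℝ => μ / 2 * ‖a + t • v‖ ^ 2) (μ * ⟪a, v⟫) 0 := by
    have hfun : (fun t : ℝ => μ / 2 * ‖a + t • v‖ ^ 2)
        = fun t : ℝ => μ / 2 * ‖a‖ ^ 2 + (μ * ⟪a, v⟫) * t + (μ / 2 * ‖v‖ ^ 2) * t ^ 2 := by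
      funext t
      rw [norm_add_sq_real, real_inner_smul_right, norm_smul, Real.norm_eq_abs, mul_pow,
        sq_abs]
      ring
    rw [hfun]
    have hp : HasDerivAt
        (fun t : ℝ => μ / 2 * ‖a‖ ^ 2 + (μ * ⟪a, v⟫) * t + (μ / 2 * ‖v‖ ^ 2) * t ^ 2)
        (0 + (μ * ⟪a, v⟫) + (μ / 2 * ‖v‖ ^ 2) * (2 * 0)) 0 := by
      refine HasDerivAt.add (HasDerivAt.add (hasDerivAt_const _ _) ?_) ?_
      · simpa using (hasDerivAt_id (0 : ℝ)).const_mul (μ * ⟪a, v⟫)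
      · simpa [mul_comm] using (hasDerivAt_pow 2 (0 : ℝ)).const_mul (μ / 2 * ‖v‖ ^ 2)
    simpa using hp
  have h1 := hasDerivAt_comp_line hf a v 0
  simp only [zero_smul, add_zero] at h1
  have hd : HasDerivAt (fun t : ℝ => φ (a + t • v)) (⟪gradient f a, v⟫ - μ * ⟪a, v⟫) 0 := by
    have := h1.sub hquad
    simpa only [hφ, Pi.sub_def, zero_smul, add_zero] using this
  have hs := hline.le_slope_of_hasDerivAt (Set.mem_univ 0) (Set.mem_univ 1) one_pos hd
  have hval : slope (fun t : ℝ => φ (a + t • v)) 0 1 = φ b - φ a := by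
    rw [slope_def_field]
    norm_num [hv]
  rw [hval] at hs
  -- unfold φ and conclude
  simp only [hφ] at hs
  have hid1 : ‖b - a‖ ^ 2 = ‖b‖ ^ 2 - 2 * ⟪a, b⟫ + ‖a‖ ^ 2 := by
    rw [norm_sub_sq_real]; ring_nf; rw [real_inner_comm]; ring
  have hid2 : ⟪a, v⟫ = ⟪a, b⟫ - ‖a‖ ^ 2 := by
    rw [hv, inner_sub_right, real_inner_self_eq_norm_sq]
  rw [← hv] at hid1
  rw [hid2] at hs
  have hid3 : μ / 2 * ‖v‖ ^ 2 = μ / 2 * ‖b‖ ^ 2 - μ * ⟪a, b⟫ + μ / 2 * ‖a‖ ^ 2 := by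
    rw [hid1]; ring
  linarith

theorem inexact_pgd_descent_aux {n : ℕ} (C : EuclideanSpace ℝ (Fin n) → ℝ) (β' μ : ℝ)
    (hμ : 0 < μ) (hdiff : Differentiable ℝ C)
    (hlip : ∀ z w, ‖gradient C z - gradient C w‖ ≤ β' * ‖z - w‖)
    (hsc : ConvexOn ℝ Set.univ (fun z => C z - μ / 2 * ‖z‖ ^ 2))
    (X : Set (EuclideanSpace ℝ (Fin n)))
    (hXne : X.Nonempty) (hXcl : IsClosed X) (hXconv : Convex ℝ X)
    (x g : EuclideanSpace ℝ (Fin n))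
    (proj : EuclideanSpace ℝ (Fin n) → EuclideanSpace ℝ (Fin n))
    (hproj : ∀ w, proj w ∈ X ∧ ∀ z ∈ X, ‖proj w - w‖ ≤ ‖z - w‖)
    (xplus : EuclideanSpace ℝ (Fin n)) (hxplus : xplus = proj (x - (1 / β') • g)) :
    ∀ y ∈ X,
      C xplus - C y ≤
        β' * ⟪x - xplus, x - y⟫ - β' / 2 * ‖xplus - x‖ ^ 2 - μ / 2 * ‖x - y‖ ^ 2 +
          ⟪gradient C x - g, xplus - y⟫ := by
  intro y hy
  -- trivial case: the space is a subsingleton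
  by_cases hn : n = 0
  · subst hn
    haveI : Subsingleton (EuclideanSpace ℝ (Fin 0)) :=
      ⟨fun a b => by ext i; exact Fin.elim0 i⟩
    have h1 : xplus = y := Subsingleton.elim _ _
    have h2 : x = y := Subsingleton.elim _ _
    rw [h1, h2]
    simp
  -- β' is positive
  have hβpos : 0 < β' := by
    have hnpos : 0 < n := Nat.pos_of_ne_zero hn
    set e : EuclideanSpace ℝ (Fin n) := EuclideanSpace.single ⟨0, hnpos⟩ (1 : ℝ) with he
    have hne : ‖e‖ = 1 := by simp [he]
    have h1 := first_order_sc hdiff hsc 0 e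
    have h2 := first_order_sc hdiff hsc e 0
    simp only [sub_zero, zero_sub, norm_neg, inner_neg_right] at h1 h2
    have h3 : ⟪gradient C e - gradient C 0, e⟫ ≤ β' := by
      calc ⟪gradient C e - gradient C 0, e⟫ ≤ ‖gradient C e - gradient C 0‖ * ‖e‖ :=
            real_inner_le_norm _ _
        _ ≤ β' * ‖e - 0‖ * ‖e‖ := by
            have := hlip e 0
            nlinarith [norm_nonneg e]
        _ = β' := by rw [sub_zero, hne]; ring
    rw [inner_sub_left] at h3
    rw [hne] at h1 h2
    simp only [one_pow, mul_one] at h1 h2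
    linarith
  -- projection variational inequality
  set w : EuclideanSpace ℝ (Fin n) := x - (1 / β') • g with hw
  obtain ⟨hpX, hpmin⟩ := hproj w
  haveI : Nonempty ↥X := hXne.to_subtype
  have hbdd : BddBelow (Set.range fun z : X => ‖w - (z : EuclideanSpace ℝ (Fin n))‖) := by
    refine ⟨0, ?_⟩
    rintro r ⟨z, rfl⟩
    exact norm_nonneg _
  have hinf : ‖w - proj w‖ = ⨅ z : X, ‖w - (z : EuclideanSpace ℝ (Fin n))‖ := by
    apply le_antisymm
    · refine le_ciInf fun z => ?_
      rw [norm_sub_rev, show (w - (z : EuclideanSpace ℝ (Fin n))) = -((z : _) - w) by abel,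
        norm_neg]
      exact hpmin z z.2
    · exact ciInf_le hbdd ⟨proj w, hpX⟩
  have hvar := (norm_eq_iInf_iff_real_inner_le_zero hXconv hpX).mp hinf y hy
  rw [← hxplus] at hvar
  -- rewrite the variational inequality
  have hvar' : ⟪x - xplus, y - xplus⟫ - 1 / β' * ⟪g, y - xplus⟫ ≤ 0 := by
    have hrw : w - xplus = (x - xplus) - (1 / β') • g := by rw [hw]; abel
    rw [hrw, inner_sub_left, real_inner_smul_left] at hvar
    exact hvar
  have hgei : ⟪g, xplus - y⟫ ≤ β' * ⟪x - xplus, xplus - y⟫ := by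
    have hneg1 : ⟪g, xplus - y⟫ = -⟪g, y - xplus⟫ := by
      rw [show xplus - y = -(y - xplus) by abel, inner_neg_right]
    have hneg2 : ⟪x - xplus, xplus - y⟫ = -⟪x - xplus, y - xplus⟫ := by
      rw [show xplus - y = -(y - xplus) by abel, inner_neg_right]
    rw [hneg1, hneg2]
    have hmul : β' * (⟪x - xplus, y - xplus⟫ - 1 / β' * ⟪g, y - xplus⟫) ≤ 0 :=
      mul_nonpos_of_nonneg_of_nonpos hβpos.le hvar'
    have hQ : β' * (1 / β' * ⟪g, y - xplus⟫) = ⟪g, y - xplus⟫ := by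
      field_simp
    linarith [hmul, hQ]
  -- descent lemma and strong convexity
  have hdesc := descent_lemma hdiff hlip x xplus
  have hstr := first_order_sc hdiff hsc x y
  -- inner product algebra
  have hA : ⟪gradient C x, xplus - x⟫ - ⟪gradient C x, y - x⟫ = ⟪gradient C x, xplus - y⟫ := by
    rw [← inner_sub_right]
    congr 1
    abel
  have hB : ⟪gradient C x - g, xplus - y⟫ = ⟪gradient C x, xplus - y⟫ - ⟪g, xplus - y⟫ :=
    inner_sub_left _ _ _
  have hC0 : ⟪x - xplus, xplus - y⟫ = ⟪x - xplus, x - y⟫ - ‖xplus - x‖ ^ 2 := by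
    rw [show ‖xplus - x‖ = ‖x - xplus‖ from norm_sub_rev _ _, ← real_inner_self_eq_norm_sq,
      ← inner_sub_right]
    congr 1
    abel
  have hC : β' * ⟪x - xplus, xplus - y⟫
      = β' * ⟪x - xplus, x - y⟫ - β' * ‖xplus - x‖ ^ 2 := by rw [hC0]; ring
  have hD : ‖y - x‖ = ‖x - y‖ := norm_sub_rev _ _
  rw [hD] at hstr
  linarith [hdesc, hstr, hgei, hC]

end Aux

/-- Descent inequality for a projected gradient step with an inexact
gradient: if `C` is differentiable with `β′`-Lipschitz gradient and `μ`-strongly convex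
(`μ > 0`), `X` is nonempty closed convex, and `x⁺ = Π_X(x − (1/β′)g)`, then for every
`y ∈ X`,
`C(x⁺) − C(y) ≤ β′⟨x − x⁺, x − y⟩ − (β′/2)‖x⁺ − x‖² − (μ/2)‖x − y‖²
  + ⟨∇C(x) − g, x⁺ − y⟩`. -/
theorem inexact_pgd_descent {n : ℕ} (C : EuclideanSpace ℝ (Fin n) → ℝ) (β' μ : ℝ)
    (hμ : 0 < μ) (hdiff : Differentiable ℝ C)
    (hlip : ∀ z w, ‖gradient C z - gradient C w‖ ≤ β' * ‖z - w‖)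
    (hsc : ConvexOn ℝ Set.univ (fun z => C z - μ / 2 * ‖z‖ ^ 2))
    (X : Set (EuclideanSpace ℝ (Fin n)))
    (hXne : X.Nonempty) (hXcl : IsClosed X) (hXconv : Convex ℝ X)
    (x g : EuclideanSpace ℝ (Fin n))
    (proj : EuclideanSpace ℝ (Fin n) → EuclideanSpace ℝ (Fin n))
    (hproj : ∀ w, proj w ∈ X ∧ ∀ z ∈ X, ‖proj w - w‖ ≤ ‖z - w‖)
    (xplus : EuclideanSpace ℝ (Fin n)) (hxplus : xplus = proj (x - (1 / β') • g)) :
    ∀ y ∈ X,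
      C xplus - C y ≤
        β' * ⟪x - xplus, x - y⟫ - β' / 2 * ‖xplus - x‖ ^ 2 - μ / 2 * ‖x - y‖ ^ 2 +
          ⟪gradient C x - g, xplus - y⟫ :=
  inexact_pgd_descent_aux C β' μ hμ hdiff hlip hsc X hXne hXcl hXconv x g proj hproj xplus hxplus
end

section
/- Per-iteration contraction with inexact gradients: Let C : ℝ^n → ℝ be differentiable with β′-Lipschitz gradient and μ-strongly convex, where 0 < μ < β′, and set γ = μ/(β′ − μ). Let X ⊆ ℝ^n be nonempty, closed and convex, let x, x* ∈ X, g ∈ ℝ^n, ε ≥ 0, and set x⁺ = Π_X(x − (1/β′)g). If ⟨∇C(x) − g, x⁺ − x⟩ ≤ ε and ⟨∇C(x) − g, x⁺ − x*⟩ ≤ ε, then C(x⁺) − C(x*) ≤ (1/(1 + γ))·(C(x) − C(x*)) + ε. (This is the single-step contraction underlying Theorem 2 of the paper.) -/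
open scoped RealInnerProductSpace


section Aux
variable {E : Type*} [NormedAddCommGroup E] [InnerProductSpace ℝ E] [CompleteSpace E]

/-- derivative of a function along a line, in terms of its gradient -/
lemma line_hasDerivAt (f : E → ℝ) (hf : Differentiable ℝ f) (a v : E) (t : ℝ) :
    HasDerivAt (fun s : ℝ => f (a + s • v)) ⟪gradient f (a + t • v), v⟫ t := by
  have hline : HasDerivAt (fun s : ℝ => a + s • v) v t := by
    simpa using ((hasDerivAt_id t).smul_const v).const_add a
  have hg := ((hf (a + t • v)).hasGradientAt).hasFDerivAt
  have h2 := hg.comp_hasDerivAt t hline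
  exact h2.congr_deriv (by simp [InnerProductSpace.toDual_apply_apply])

/-- first-order lower bound for a convex function along a line -/
lemma convex_line_lb (f : E → ℝ) (hf : ConvexOn ℝ Set.univ f)
    {x y : E} {d : ℝ} (hd : HasDerivAt (fun t : ℝ => f (x + t • (y - x))) d 0) :
    f x + d ≤ f y := by
  set φ : ℝ → ℝ := fun t => f (x + t • (y - x)) with hφdef
  have hφ : ConvexOn ℝ Set.univ φ := by
    refine ⟨convex_univ, ?_⟩
    intro s _ t _ a b ha hb hab
    have h1 : x + (a * s + b * t) • (y - x)
        = a • (x + s • (y - x)) + b • (x + t • (y - x)) := by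
      match_scalars <;> linarith
    have h2 := hf.2 (Set.mem_univ (x + s • (y - x))) (Set.mem_univ (x + t • (y - x))) ha hb hab
    simp only [hφdef, smul_eq_mul]
    rw [h1]
    exact h2
  have h3 := hφ.le_slope_of_hasDerivWithinAt_Ioi (Set.mem_univ 0) (Set.mem_univ 1) one_pos
    hd.hasDerivWithinAt
  rw [slope_def_field] at h3
  have h0 : φ 0 = f x := by simp [hφdef]
  have h1 : φ 1 = f y := by simp [hφdef]
  rw [h0, h1] at h3
  simp at h3
  linarith

/-- a function with `β`-Lipschitz gradient satisfies: `β/2‖·‖² - f` is convex -/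
lemma smooth_aux (f : E → ℝ) (β : ℝ) (hdiff : Differentiable ℝ f)
    (hlip : ∀ z w, ‖gradient f z - gradient f w‖ ≤ β * ‖z - w‖) :
    ConvexOn ℝ Set.univ (fun z => β / 2 * ‖z‖ ^ 2 - f z) := by
  set h : E → ℝ := fun z => β / 2 * ‖z‖ ^ 2 - f z with hhdef
  have key : ∀ a v : E, ConvexOn ℝ Set.univ (fun t : ℝ => h (a + t • v)) := by
    intro a v
    set ψ : ℝ → ℝ := fun t => h (a + t • v) with hψdef
    have hder : ∀ t : ℝ, HasDerivAt ψ
        (β * ⟪a + t • v, v⟫ - ⟪gradient f (a + t • v), v⟫) t := by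
      intro t
      have hline : HasDerivAt (fun s : ℝ => a + s • v) v t := by
        simpa using ((hasDerivAt_id t).smul_const v).const_add a
      have hq : HasDerivAt (fun s : ℝ => ⟪a + s • v, a + s • v⟫)
          (⟪a + t • v, v⟫ + ⟪v, a + t • v⟫) t := hline.inner ℝ hline
      have hq2 : HasDerivAt (fun s : ℝ => β / 2 * ‖a + s • v‖ ^ 2)
          (β / 2 * (⟪a + t • v, v⟫ + ⟪v, a + t • v⟫)) t := by
        have := hq.const_mul (β / 2)
        simpa [real_inner_self_eq_norm_sq] using this
      have hC := line_hasDerivAt f hdiff a v t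
      have := hq2.sub hC
      refine this.congr_deriv ?_
      rw [real_inner_comm v (a + t • v)]
      ring
    have hmono : Monotone (deriv ψ) := by
      have hd : deriv ψ = fun t => β * ⟪a + t • v, v⟫ - ⟪gradient f (a + t • v), v⟫ :=
        funext fun t => (hder t).deriv
      rw [hd]
      intro s t hst
      have h1 : ⟪a + t • v, v⟫ - ⟪a + s • v, v⟫ = (t - s) * ‖v‖ ^ 2 := by
        rw [← inner_sub_left]
        have : (a + t • v) - (a + s • v) = (t - s) • v := by
          rw [add_sub_add_left_eq_sub, ← sub_smul]
        rw [this, real_inner_smul_left, real_inner_self_eq_norm_sq]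
      have h2 : ⟪gradient f (a + t • v), v⟫ - ⟪gradient f (a + s • v), v⟫
          ≤ β * (t - s) * ‖v‖ ^ 2 := by
        rw [← inner_sub_left]
        calc ⟪gradient f (a + t • v) - gradient f (a + s • v), v⟫
            ≤ ‖gradient f (a + t • v) - gradient f (a + s • v)‖ * ‖v‖ :=
              real_inner_le_norm _ _
          _ ≤ (β * ‖(a + t • v) - (a + s • v)‖) * ‖v‖ :=
              mul_le_mul_of_nonneg_right (hlip _ _) (norm_nonneg v)
          _ = β * (t - s) * ‖v‖ ^ 2 := by
              have e : (a + t • v) - (a + s • v) = (t - s) • v := by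
                rw [add_sub_add_left_eq_sub, ← sub_smul]
              rw [e, norm_smul, Real.norm_eq_abs, abs_of_nonneg (by linarith : (0:ℝ) ≤ t - s)]
              ring
      have h3 : β * ⟪a + t • v, v⟫ - β * ⟪a + s • v, v⟫ = β * (t - s) * ‖v‖ ^ 2 := by
        rw [← mul_sub, h1]; ring
      dsimp only
      linarith [h2, h3]
    have hψdiff : Differentiable ℝ ψ := fun t => (hder t).differentiableAt
    exact hmono.convexOn_univ_of_deriv hψdiff
  refine ⟨convex_univ, ?_⟩
  intro p _ q _ a b ha hb hab
  have hk := (key p (q - p)).2 (Set.mem_univ (0:ℝ)) (Set.mem_univ (1:ℝ)) ha hb hab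
  simp only [smul_eq_mul, mul_zero, mul_one, zero_add, zero_smul, add_zero, one_smul] at hk
  have h1 : p + (q - p) = q := by abel
  rw [h1] at hk
  have h2 : a • p + b • q = p + b • (q - p) := by
    match_scalars <;> linarith
  rw [h2]
  simpa using hk

/-- smoothness upper bound from Lipschitz gradient -/
lemma smooth_ub (f : E → ℝ) (β : ℝ) (hdiff : Differentiable ℝ f)
    (hlip : ∀ z w, ‖gradient f z - gradient f w‖ ≤ β * ‖z - w‖) (x y : E) :
    f y ≤ f x + ⟪gradient f x, y - x⟫ + β / 2 * ‖y - x‖ ^ 2 := by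
  have hline : HasDerivAt (fun s : ℝ => x + s • (y - x)) (y - x) 0 := by
    simpa using ((hasDerivAt_id (0:ℝ)).smul_const (y - x)).const_add x
  have hq : HasDerivAt (fun s : ℝ => β / 2 * ‖x + s • (y - x)‖ ^ 2)
      (β / 2 * (⟪x + (0:ℝ) • (y - x), y - x⟫ + ⟪y - x, x + (0:ℝ) • (y - x)⟫)) 0 := by
    have := (hline.inner ℝ hline).const_mul (β / 2)
    simpa [real_inner_self_eq_norm_sq] using this
  have hC := line_hasDerivAt f hdiff x (y - x) 0
  have hd := hq.sub hC
  have hlb := convex_line_lb (fun z => β / 2 * ‖z‖ ^ 2 - f z) (smooth_aux f β hdiff hlip) hd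
  simp only [zero_smul, add_zero] at hlb
  have hyx : x + (y - x) = y := by abel
  have hexp0 : ‖y‖ ^ 2 = ‖x‖ ^ 2 + 2 * ⟪x, y - x⟫ + ‖y - x‖ ^ 2 := by
    conv_lhs => rw [← hyx]
    rw [norm_add_sq_real]
  have hexp : β / 2 * ‖y‖ ^ 2
      = β / 2 * ‖x‖ ^ 2 + β * ⟪x, y - x⟫ + β / 2 * ‖y - x‖ ^ 2 := by
    rw [hexp0]; ring
  have hcomm : ⟪y - x, x⟫ = ⟪x, y - x⟫ := real_inner_comm _ _
  rw [hcomm] at hlb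
  linarith [hlb, hexp]

/-- first-order lower bound from strong convexity -/
lemma strong_lb (f : E → ℝ) (μ : ℝ) (hdiff : Differentiable ℝ f)
    (hsc : ConvexOn ℝ Set.univ (fun z => f z - μ / 2 * ‖z‖ ^ 2)) (x y : E) :
    f x + ⟪gradient f x, y - x⟫ + μ / 2 * ‖y - x‖ ^ 2 ≤ f y := by
  have hline : HasDerivAt (fun s : ℝ => x + s • (y - x)) (y - x) 0 := by
    simpa using ((hasDerivAt_id (0:ℝ)).smul_const (y - x)).const_add x
  have hq : HasDerivAt (fun s : ℝ => μ / 2 * ‖x + s • (y - x)‖ ^ 2)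
      (μ / 2 * (⟪x + (0:ℝ) • (y - x), y - x⟫ + ⟪y - x, x + (0:ℝ) • (y - x)⟫)) 0 := by
    have := (hline.inner ℝ hline).const_mul (μ / 2)
    simpa [real_inner_self_eq_norm_sq] using this
  have hC := line_hasDerivAt f hdiff x (y - x) 0
  have hd := hC.sub hq
  have hlb := convex_line_lb (fun z => f z - μ / 2 * ‖z‖ ^ 2) hsc hd
  simp only [zero_smul, add_zero] at hlb
  have hyx : x + (y - x) = y := by abel
  have hexp0 : ‖y‖ ^ 2 = ‖x‖ ^ 2 + 2 * ⟪x, y - x⟫ + ‖y - x‖ ^ 2 := by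
    conv_lhs => rw [← hyx]
    rw [norm_add_sq_real]
  have hexp : μ / 2 * ‖y‖ ^ 2
      = μ / 2 * ‖x‖ ^ 2 + μ * ⟪x, y - x⟫ + μ / 2 * ‖y - x‖ ^ 2 := by
    rw [hexp0]; ring
  have hcomm : ⟪y - x, x⟫ = ⟪x, y - x⟫ := real_inner_comm _ _
  rw [hcomm] at hlb
  linarith [hlb, hexp]

omit [CompleteSpace E] in
lemma proj_var_ineq {X : Set E} (hXconv : Convex ℝ X)
    {u p : E} (hp : p ∈ X) (hmin : ∀ z ∈ X, ‖p - u‖ ≤ ‖z - u‖) :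
    ∀ z ∈ X, ⟪u - p, z - p⟫ ≤ 0 := by
  have heq : ‖u - p‖ = ⨅ w : X, ‖u - w‖ := by
    letI : Nonempty X := ⟨⟨p, hp⟩⟩
    apply le_antisymm
    · apply le_ciInf
      intro w
      rw [norm_sub_rev u p, norm_sub_rev u w]
      exact hmin w w.2
    · exact ciInf_le ⟨0, fun r ⟨w, hw⟩ => hw ▸ norm_nonneg _⟩ (⟨p, hp⟩ : X)
  exact (norm_eq_iInf_iff_real_inner_le_zero hXconv hp).mp heq

end Aux

set_option maxHeartbeats 1000000

/-- Per-iteration contraction of projected gradient descent with an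
inexact gradient: with `0 < μ < β′`, `γ = μ/(β′ − μ)`, `x, x* ∈ X`,
`x⁺ = Π_X(x − (1/β′)g)`, and inner-product error bounds
`⟨∇C(x) − g, x⁺ − x⟩ ≤ ε` and `⟨∇C(x) − g, x⁺ − x*⟩ ≤ ε`, one has
`C(x⁺) − C(x*) ≤ (1/(1 + γ))(C(x) − C(x*)) + ε`. -/
theorem inexact_pgd_contraction {n : ℕ} (C : EuclideanSpace ℝ (Fin n) → ℝ) (β' μ : ℝ)
    (hμ : 0 < μ) (hμβ : μ < β') (hdiff : Differentiable ℝ C)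
    (hlip : ∀ z w, ‖gradient C z - gradient C w‖ ≤ β' * ‖z - w‖)
    (hsc : ConvexOn ℝ Set.univ (fun z => C z - μ / 2 * ‖z‖ ^ 2))
    (X : Set (EuclideanSpace ℝ (Fin n)))
    (hXne : X.Nonempty) (hXcl : IsClosed X) (hXconv : Convex ℝ X)
    (x xstar : EuclideanSpace ℝ (Fin n)) (hx : x ∈ X) (hxstar : xstar ∈ X)
    (g : EuclideanSpace ℝ (Fin n)) (ε : ℝ) (hε : 0 ≤ ε)
    (proj : EuclideanSpace ℝ (Fin n) → EuclideanSpace ℝ (Fin n))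
    (hproj : ∀ w, proj w ∈ X ∧ ∀ z ∈ X, ‖proj w - w‖ ≤ ‖z - w‖)
    (xplus : EuclideanSpace ℝ (Fin n)) (hxplus : xplus = proj (x - (1 / β') • g))
    (herr1 : ⟪gradient C x - g, xplus - x⟫ ≤ ε)
    (herr2 : ⟪gradient C x - g, xplus - xstar⟫ ≤ ε) :
    C xplus - C xstar ≤
      (1 / (1 + μ / (β' - μ))) * (C x - C xstar) + ε := by
  have hβ : 0 < β' := hμ.trans hμβ
  have hβμ : 0 < β' - μ := sub_pos.mpr hμβ
  set G := gradient C x with hG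
  set lam : ℝ := μ / β' with hlam
  have hlam0 : 0 ≤ lam := le_of_lt (div_pos hμ hβ)
  have hlam1 : 0 ≤ 1 - lam := by
    have : lam < 1 := (div_lt_one hβ).mpr hμβ
    linarith
  set z := lam • xstar + (1 - lam) • x with hzdef
  have hzX : z ∈ X := hXconv hxstar hx hlam0 hlam1 (by ring)
  -- smoothness upper bound
  have hsm : C xplus ≤ C x + ⟪G, xplus - x⟫ + β' / 2 * ‖xplus - x‖ ^ 2 :=
    smooth_ub C β' hdiff hlip x xplus
  -- strong convexity lower bound at x towards z
  have hst : C x + ⟪G, z - x⟫ + μ / 2 * ‖z - x‖ ^ 2 ≤ C z :=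
    strong_lb C μ hdiff hsc x z
  -- strong convexity combination inequality
  have hcomb0 := hsc.2 (Set.mem_univ xstar) (Set.mem_univ x) hlam0 hlam1 (by ring)
  simp only [smul_eq_mul, ← hzdef] at hcomb0
  -- hcomb0 : C z - μ/2‖z‖² ≤ lam*(C xstar - μ/2‖xstar‖²) + (1-lam)*(C x - μ/2‖x‖²)
  -- projection variational inequality
  have hvar : ⟪(x - (1 / β') • g) - xplus, z - xplus⟫ ≤ 0 := by
    have h1 := (hproj (x - (1 / β') • g)).1
    have h2 := (hproj (x - (1 / β') • g)).2
    rw [← hxplus] at h1 h2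
    exact proj_var_ineq hXconv h1 h2 z hzX
  -- inner product identities
  have ide1 : ⟪G, xplus - x⟫ - ⟪G, z - x⟫ = ⟪G, xplus - z⟫ := by
    simp only [inner_sub_right]; ring
  have ide2 : ⟪G, xplus - z⟫ = ⟪g, xplus - z⟫ + ⟪G - g, xplus - z⟫ := by
    simp only [inner_sub_left]; ring
  have ide3 : ⟪G - g, xplus - z⟫
      = lam * ⟪G - g, xplus - xstar⟫ + (1 - lam) * ⟪G - g, xplus - x⟫ := by
    have e : xplus - z = lam • (xplus - xstar) + (1 - lam) • (xplus - x) := by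
      rw [hzdef]; match_scalars <;> ring
    rw [e, inner_add_right, real_inner_smul_right, real_inner_smul_right]
  have herrz : ⟪G - g, xplus - z⟫ ≤ ε := by
    have h1 := mul_le_mul_of_nonneg_left herr2 hlam0
    have h2 := mul_le_mul_of_nonneg_left herr1 hlam1
    rw [ide3]; nlinarith [h1, h2]
  -- projection inequality rearranged
  have hproj2 : ⟪g, xplus - z⟫ ≤ β' * ⟪x - xplus, xplus - z⟫ := by
    have ide4 : ⟪(x - (1 / β') • g) - xplus, z - xplus⟫
        = ⟪x - xplus, z - xplus⟫ - (1 / β') * ⟪g, z - xplus⟫ := by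
      simp only [inner_sub_left, real_inner_smul_left]; ring
    have e1 : ⟪g, z - xplus⟫ = -⟪g, xplus - z⟫ := by
      rw [← inner_neg_right]; congr 1; abel
    have e2 : ⟪x - xplus, z - xplus⟫ = -⟪x - xplus, xplus - z⟫ := by
      rw [← inner_neg_right]; congr 1; abel
    rw [ide4, e1, e2] at hvar
    have h6 : (1 / β') * ⟪g, xplus - z⟫ ≤ ⟪x - xplus, xplus - z⟫ := by linarith
    calc ⟪g, xplus - z⟫ = β' * ((1 / β') * ⟪g, xplus - z⟫) := by
          field_simp
      _ ≤ β' * ⟪x - xplus, xplus - z⟫ := mul_le_mul_of_nonneg_left h6 hβ.le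
  -- norm identities
  have ide6 : 2 * ⟪x - xplus, xplus - z⟫
      = ‖x - z‖ ^ 2 - ‖xplus - x‖ ^ 2 - ‖xplus - z‖ ^ 2 := by
    have e : x - z = (x - xplus) + (xplus - z) := by abel
    have h7 : ‖x - z‖ ^ 2 = ‖x - xplus‖ ^ 2 + 2 * ⟪x - xplus, xplus - z⟫
        + ‖xplus - z‖ ^ 2 := by
      rw [e, norm_add_sq_real]
    have h8 : ‖x - xplus‖ = ‖xplus - x‖ := norm_sub_rev _ _
    rw [h8] at h7
    linarith
  have ide7 : ‖z - x‖ ^ 2 = lam ^ 2 * ‖xstar - x‖ ^ 2 := by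
    have e : z - x = lam • (xstar - x) := by
      rw [hzdef]; match_scalars <;> ring
    rw [e, norm_smul, Real.norm_eq_abs, mul_pow, sq_abs]
  have ide7' : ‖x - z‖ ^ 2 = lam ^ 2 * ‖xstar - x‖ ^ 2 := by
    rw [norm_sub_rev]; exact ide7
  have ide8 : lam * ‖xstar‖ ^ 2 + (1 - lam) * ‖x‖ ^ 2 - ‖z‖ ^ 2
      = lam * (1 - lam) * ‖xstar - x‖ ^ 2 := by
    have e1 : ‖z‖ ^ 2 = lam ^ 2 * ‖xstar‖ ^ 2
        + 2 * (lam * (1 - lam) * ⟪xstar, x⟫) + (1 - lam) ^ 2 * ‖x‖ ^ 2 := by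
      rw [hzdef, norm_add_sq_real, norm_smul, norm_smul, real_inner_smul_left,
        real_inner_smul_right, Real.norm_eq_abs, Real.norm_eq_abs,
        abs_of_nonneg hlam0, abs_of_nonneg hlam1, mul_pow, mul_pow]
      ring
    have e2 : ‖xstar - x‖ ^ 2 = ‖xstar‖ ^ 2 - 2 * ⟪xstar, x⟫ + ‖x‖ ^ 2 :=
      norm_sub_sq_real _ _
    rw [e1, e2]; ring
  -- coefficient identity
  have hcoef : (β' - μ) / 2 * lam ^ 2 * ‖xstar - x‖ ^ 2
      = μ / 2 * (lam * (1 - lam)) * ‖xstar - x‖ ^ 2 := by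
    have : (β' - μ) / 2 * lam ^ 2 = μ / 2 * (lam * (1 - lam)) := by
      rw [hlam]; field_simp
    rw [this]
  -- multiplied identities for linarith
  have hm1 : β' / 2 * (2 * ⟪x - xplus, xplus - z⟫)
      = β' / 2 * (‖x - z‖ ^ 2 - ‖xplus - x‖ ^ 2 - ‖xplus - z‖ ^ 2) := by rw [ide6]
  have hm2 : μ / 2 * ‖z - x‖ ^ 2 = μ / 2 * (lam ^ 2 * ‖xstar - x‖ ^ 2) := by rw [ide7]
  have hm3 : β' / 2 * ‖x - z‖ ^ 2 = β' / 2 * (lam ^ 2 * ‖xstar - x‖ ^ 2) := by rw [ide7']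
  have hm4 : μ / 2 * (lam * ‖xstar‖ ^ 2 + (1 - lam) * ‖x‖ ^ 2 - ‖z‖ ^ 2)
      = μ / 2 * (lam * (1 - lam) * ‖xstar - x‖ ^ 2) := by rw [ide8]
  have hN4 : 0 ≤ β' / 2 * ‖xplus - z‖ ^ 2 := by positivity
  -- final goal
  have hco : 1 / (1 + μ / (β' - μ)) = 1 - lam := by
    rw [hlam]; field_simp; ring
  rw [hco]
  linarith [hsm, hst, hcomb0, ide1, ide2, herrz, hproj2, hm1, hm2, hm3, hm4, hcoef, hN4]
end
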